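/- arXiv:0807.4107 — 16 statements merged into one kernel-verified Lean document; each statement's English description precedes it below -/
import Mathlib

section
/- Let t, r, φ, z : ℝ → ℝ be a geodesic of Gödel's universe. Then for every ρ₁, ρ₂ ∈ ℝ the quantity P_{ρ₁,ρ₂}(u) = (ρ₂ + ρ₁·cosh(r(u))²/2)·t'(u) + ((ρ₁·cosh(r(u))² + 4ρ₂)·sinh(r(u))²/(2√2))·φ'(u) is constant in u; that is, P_{ρ₁,ρ₂}(u) = P_{ρ₁,ρ₂}(u₀) for all u, u₀ ∈ ℝ. -/
open Real

/-- A function is twice differentiable (everywhere on ℝ). -/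
def TwiceDiff (f : ℝ → ℝ) : Prop :=
  Differentiable ℝ f ∧ Differentiable ℝ (deriv f)

/-- The four geodesic differential equations of Gödel's universe in
cylindrical coordinates. -/
def GodelGeodesicEqns (t r φ z : ℝ → ℝ) : Prop :=
  ∀ u : ℝ,
    (deriv (deriv t) u + 4 * Real.tanh (r u) * deriv t u * deriv r u
      + 2 * Real.sqrt 2 * (Real.sinh (r u) ^ 3 / Real.cosh (r u)) * deriv φ u * deriv r u = 0)
    ∧ (deriv (deriv r) u
      + 2 * Real.sqrt 2 * Real.sinh (r u) * Real.cosh (r u) * deriv t u * deriv φ u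
      + Real.sinh (r u) * Real.cosh (r u) * (2 * Real.cosh (r u) ^ 2 - 3) * (deriv φ u) ^ 2 = 0)
    ∧ (deriv (deriv φ) u * Real.sinh (r u) * Real.cosh (r u)
      - 2 * Real.sqrt 2 * deriv t u * deriv r u + 2 * deriv φ u * deriv r u = 0)
    ∧ (deriv (deriv z) u = 0)

/-- The conserved momentum quantity `P_{ρ₁,ρ₂}` along a curve. -/
noncomputable def godelP (t r φ : ℝ → ℝ) (ρ₁ ρ₂ : ℝ) (u : ℝ) : ℝ :=
  (ρ₂ + ρ₁ * Real.cosh (r u) ^ 2 / 2) * deriv t u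
    + ((ρ₁ * Real.cosh (r u) ^ 2 + 4 * ρ₂) * Real.sinh (r u) ^ 2 / (2 * Real.sqrt 2)) * deriv φ u

/-- The conserved quantity `C₁` along a curve. -/
noncomputable def godelC1 (t r φ : ℝ → ℝ) (u : ℝ) : ℝ :=
  -(Real.sqrt 2) * Real.cos (φ u) * Real.sinh (2 * r u) * deriv t u
    + Real.sin (φ u) * deriv r u
    - Real.cos (φ u) * (Real.cosh (2 * r u) - 2) * Real.sinh (2 * r u) / 2 * deriv φ u

/-- The conserved quantity `C₂` along a curve. -/
noncomputable def godelC2 (t r φ : ℝ → ℝ) (u : ℝ) : ℝ :=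
  Real.sqrt 2 * Real.sin (φ u) * Real.sinh (2 * r u) * deriv t u
    + Real.cos (φ u) * deriv r u
    + Real.sin (φ u) * (Real.cosh (2 * r u) - 2) * Real.sinh (2 * r u) / 2 * deriv φ u

/-- Along a geodesic of Gödel's universe, the momentum quantity
`P_{ρ₁,ρ₂}` is conserved for every `ρ₁ ρ₂ : ℝ`. -/
theorem godel_momentum_conserved (t r φ z : ℝ → ℝ)
    (ht : TwiceDiff t) (hr : TwiceDiff r) (hφ : TwiceDiff φ) (hz : TwiceDiff z)
    (hrpos : ∀ u, 0 < r u)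
    (hgeo : GodelGeodesicEqns t r φ z) :
    ∀ (ρ₁ ρ₂ : ℝ) (u u₀ : ℝ), godelP t r φ ρ₁ ρ₂ u = godelP t r φ ρ₁ ρ₂ u₀ := by
  intro ρ₁ ρ₂ u u₀
  have key : ∀ v : ℝ, HasDerivAt (godelP t r φ ρ₁ ρ₂) 0 v := by
    intro v
    obtain ⟨e1, e2, e3, e4⟩ := hgeo v
    set c := Real.cosh (r v) with hcdef
    set s := Real.sinh (r v) with hsdef
    set r1 := deriv r v
    set t1 := deriv t v
    set φ1 := deriv φ v
    set t2 := deriv (deriv t) v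
    set φ2 := deriv (deriv φ) v
    have hrv : HasDerivAt r r1 v := (hr.1 v).hasDerivAt
    have htv : HasDerivAt (deriv t) t2 v := (ht.2 v).hasDerivAt
    have hφv : HasDerivAt (deriv φ) φ2 v := (hφ.2 v).hasDerivAt
    have hc : HasDerivAt (fun u => Real.cosh (r u)) (s * r1) v :=
      (Real.hasDerivAt_cosh (r v)).comp v hrv
    have hs : HasDerivAt (fun u => Real.sinh (r u)) (c * r1) v :=
      (Real.hasDerivAt_sinh (r v)).comp v hrv
    have hc2 : HasDerivAt (fun u => Real.cosh (r u) ^ 2) (2 * c ^ 1 * (s * r1)) v := hc.pow 2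
    have hs2 : HasDerivAt (fun u => Real.sinh (r u) ^ 2) (2 * s ^ 1 * (c * r1)) v := hs.pow 2
    have hA : HasDerivAt (fun u => ρ₂ + ρ₁ * Real.cosh (r u) ^ 2 / 2)
        (ρ₁ * (2 * c ^ 1 * (s * r1)) / 2) v := ((hc2.const_mul ρ₁).div_const 2).const_add ρ₂
    have hB : HasDerivAt (fun u => (ρ₂ + ρ₁ * Real.cosh (r u) ^ 2 / 2) * deriv t u)
        (ρ₁ * (2 * c ^ 1 * (s * r1)) / 2 * t1 + (ρ₂ + ρ₁ * c ^ 2 / 2) * t2) v := hA.mul htv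
    have hC : HasDerivAt (fun u => ρ₁ * Real.cosh (r u) ^ 2 + 4 * ρ₂)
        (ρ₁ * (2 * c ^ 1 * (s * r1))) v := (hc2.const_mul ρ₁).add_const (4 * ρ₂)
    have hD : HasDerivAt (fun u => (ρ₁ * Real.cosh (r u) ^ 2 + 4 * ρ₂) * Real.sinh (r u) ^ 2)
        (ρ₁ * (2 * c ^ 1 * (s * r1)) * s ^ 2 + (ρ₁ * c ^ 2 + 4 * ρ₂) * (2 * s ^ 1 * (c * r1))) v :=
      hC.mul hs2
    have hE : HasDerivAt
        (fun u => (ρ₁ * Real.cosh (r u) ^ 2 + 4 * ρ₂) * Real.sinh (r u) ^ 2 / (2 * Real.sqrt 2)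
          * deriv φ u)
        ((ρ₁ * (2 * c ^ 1 * (s * r1)) * s ^ 2 + (ρ₁ * c ^ 2 + 4 * ρ₂) * (2 * s ^ 1 * (c * r1)))
            / (2 * Real.sqrt 2) * φ1
          + (ρ₁ * c ^ 2 + 4 * ρ₂) * s ^ 2 / (2 * Real.sqrt 2) * φ2) v :=
      (hD.div_const (2 * Real.sqrt 2)).mul hφv
    have hmain := hB.add hE
    have hP : godelP t r φ ρ₁ ρ₂ = fun u =>
        (ρ₂ + ρ₁ * Real.cosh (r u) ^ 2 / 2) * deriv t u
          + (ρ₁ * Real.cosh (r u) ^ 2 + 4 * ρ₂) * Real.sinh (r u) ^ 2 / (2 * Real.sqrt 2)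
            * deriv φ u := by
      funext w; simp [godelP]
    rw [hP]
    refine hmain.congr_deriv ?_
    have hcpos : (0:ℝ) < c := Real.cosh_pos (r v)
    have hcne : c ≠ 0 := ne_of_gt hcpos
    have hsq : c ^ 2 - s ^ 2 = 1 := Real.cosh_sq_sub_sinh_sq (r v)
    have h2 : Real.sqrt 2 * Real.sqrt 2 = 2 := Real.mul_self_sqrt (by norm_num)
    have h2ne : Real.sqrt 2 ≠ 0 := by positivity
    have hqw : Real.sqrt 2 * (Real.sqrt 2)⁻¹ = 1 := mul_inv_cancel₀ h2ne
    rw [Real.tanh_eq_sinh_div_cosh] at e1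
    have e1' : c * t2 + 4 * s * t1 * r1 + 2 * Real.sqrt 2 * s ^ 3 * φ1 * r1 = 0 := by
      simp only [← hcdef, ← hsdef] at e1
      have hcinv : c * c⁻¹ = 1 := mul_inv_cancel₀ hcne
      linear_combination c * e1 + (-(4 * s * t1 * r1 + 2 * Real.sqrt 2 * s ^ 3 * φ1 * r1)) * hcinv
    have hcD : c * (ρ₁ * (2 * c ^ 1 * (s * r1)) / 2 * t1 + (ρ₂ + ρ₁ * c ^ 2 / 2) * t2
        + ((ρ₁ * (2 * c ^ 1 * (s * r1)) * s ^ 2 + (ρ₁ * c ^ 2 + 4 * ρ₂) * (2 * s ^ 1 * (c * r1)))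
            / (2 * Real.sqrt 2) * φ1
          + (ρ₁ * c ^ 2 + 4 * ρ₂) * s ^ 2 / (2 * Real.sqrt 2) * φ2)) = 0 := by
      linear_combination
        (ρ₂ + (1/2 : ℝ) * c^2 * ρ₁) * e1'
        + ((2 : ℝ) * (Real.sqrt 2)⁻¹ * s * ρ₂ + (1/2 : ℝ) * (Real.sqrt 2)⁻¹ * c^2 * s * ρ₁) * e3
        + ((-2 : ℝ) * (Real.sqrt 2)⁻¹ * s^3 * r1 * φ1 * ρ₂
            + (-1 : ℝ) * (Real.sqrt 2)⁻¹ * s^3 * r1 * φ1 * ρ₁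
            + (-1 : ℝ) * (Real.sqrt 2)⁻¹ * s^5 * r1 * φ1 * ρ₁) * h2
        + ((4 : ℝ) * s * r1 * t1 * ρ₂ + c^2 * s * r1 * t1 * ρ₁
            + (2 : ℝ) * Real.sqrt 2 * s^3 * r1 * φ1 * ρ₂
            + Real.sqrt 2 * s^3 * r1 * φ1 * ρ₁
            + Real.sqrt 2 * s^5 * r1 * φ1 * ρ₁) * hqw
        + ((4 : ℝ) * (Real.sqrt 2)⁻¹ * s * r1 * φ1 * ρ₂
            + (2 : ℝ) * (Real.sqrt 2)⁻¹ * s^3 * r1 * φ1 * ρ₁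
            + (Real.sqrt 2)⁻¹ * c^2 * s * r1 * φ1 * ρ₁
            + (-1 : ℝ) * Real.sqrt 2 * s^3 * r1 * φ1 * ρ₁) * hsq
    exact ((mul_eq_zero.mp hcD).resolve_left hcne)
  have hdiff : Differentiable ℝ (godelP t r φ ρ₁ ρ₂) := fun x => (key x).differentiableAt
  have hd0 : ∀ x, deriv (godelP t r φ ρ₁ ρ₂) x = 0 := fun x => (key x).deriv
  exact is_const_of_deriv_eq_zero hdiff hd0 u u₀
end

section
/- Let t, r, φ, z : ℝ → ℝ be a geodesic of Gödel's universe. Then the quantity C₁(u) = −√2·cos(φ(u))·sinh(2r(u))·t'(u) + sin(φ(u))·r'(u) − (cos(φ(u))·(cosh(2r(u)) − 2)·sinh(2r(u))/2)·φ'(u) is constant in u; that is, C₁(u) = C₁(u₀) for all u, u₀ ∈ ℝ. -/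
open Real

/-- Along a geodesic of Gödel's universe, the quantity `C₁` is conserved. -/
theorem godel_C1_conserved (t r φ z : ℝ → ℝ)
    (ht : TwiceDiff t) (hr : TwiceDiff r) (hφ : TwiceDiff φ) (hz : TwiceDiff z)
    (hrpos : ∀ u, 0 < r u)
    (hgeo : GodelGeodesicEqns t r φ z) :
    ∀ u u₀ : ℝ, godelC1 t r φ u = godelC1 t r φ u₀ := by
  have key : ∀ u : ℝ, HasDerivAt (godelC1 t r φ) 0 u := by
    intro u
    obtain ⟨h1, h2, h3, -⟩ := hgeo u
    have hc : Real.cosh (r u) ≠ 0 := (Real.cosh_pos (r u)).ne'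
    have hw : Real.sqrt 2 ^ 2 = 2 := Real.sq_sqrt (by norm_num)
    have hφd : HasDerivAt φ (deriv φ u) u := (hφ.1 u).hasDerivAt
    have hrd : HasDerivAt r (deriv r u) u := (hr.1 u).hasDerivAt
    have htd' : HasDerivAt (deriv t) (deriv (deriv t) u) u := (ht.2 u).hasDerivAt
    have hrd' : HasDerivAt (deriv r) (deriv (deriv r) u) u := (hr.2 u).hasDerivAt
    have hφd' : HasDerivAt (deriv φ) (deriv (deriv φ) u) u := (hφ.2 u).hasDerivAt
    have h2r : HasDerivAt (fun u => 2 * r u) (2 * deriv r u) u := hrd.const_mul 2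
    have hsh : HasDerivAt (fun u => Real.sinh (2 * r u))
        (Real.cosh (2 * r u) * (2 * deriv r u)) u := h2r.sinh
    have hch : HasDerivAt (fun u => Real.cosh (2 * r u))
        (Real.sinh (2 * r u) * (2 * deriv r u)) u := h2r.cosh
    have hcos : HasDerivAt (fun u => Real.cos (φ u)) (-Real.sin (φ u) * deriv φ u) u := hφd.cos
    have hsin : HasDerivAt (fun u => Real.sin (φ u)) (Real.cos (φ u) * deriv φ u) u := hφd.sin
    have H := ((((hcos.const_mul (-(Real.sqrt 2))).mul hsh).mul htd').add (hsin.mul hrd')).sub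
      ((((hcos.mul (hch.sub_const 2)).mul hsh).div_const 2).mul hφd')
    have h1' : Real.cosh (r u) * deriv (deriv t) u
        + 4 * Real.sinh (r u) * deriv t u * deriv r u
        + 2 * Real.sqrt 2 * Real.sinh (r u) ^ 3 * deriv φ u * deriv r u = 0 := by
      rw [Real.tanh_eq_sinh_div_cosh] at h1
      field_simp at h1
      linear_combination h1
    refine (H.congr_deriv ?_ : HasDerivAt (godelC1 t r φ) 0 u)
    simp only [Real.sinh_two_mul, Real.cosh_two_mul, Pi.mul_apply]
    linear_combination (-(2 * Real.sqrt 2 * Real.sinh (r u) * Real.cos (φ u))) * h1'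
      + Real.sin (φ u) * h2
      + (-(Real.cos (φ u) * (2 * Real.cosh (r u) ^ 2 - 3))) * h3
      + (4 * Real.sinh (r u) ^ 4 * deriv r u * deriv φ u * Real.cos (φ u)) * hw
      + (5 * deriv r u * deriv φ u * Real.cos (φ u)
          - 6 * Real.sqrt 2 * deriv t u * deriv r u * Real.cos (φ u)
          - Real.cosh (r u) ^ 2 * deriv r u * deriv φ u * Real.cos (φ u)
          + Real.sinh (r u) * Real.cosh (r u) * deriv (deriv φ) u * Real.cos (φ u)
          - Real.sinh (r u) * Real.cosh (r u) * (deriv φ u) ^ 2 * Real.sin (φ u)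
          - 7 * Real.sinh (r u) ^ 2 * deriv r u * deriv φ u * Real.cos (φ u))
        * Real.cosh_sq_sub_sinh_sq (r u)
  intro u u₀
  exact is_const_of_deriv_eq_zero (fun v => (key v).differentiableAt)
    (fun v => (key v).deriv) u u₀
end

section
/- Let t, r, φ, z : ℝ → ℝ be a geodesic of Gödel's universe. Then the quantity C₂(u) = √2·sin(φ(u))·sinh(2r(u))·t'(u) + cos(φ(u))·r'(u) + (sin(φ(u))·(cosh(2r(u)) − 2)·sinh(2r(u))/2)·φ'(u) is constant in u; that is, C₂(u) = C₂(u₀) for all u, u₀ ∈ ℝ. -/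
open Real

/-- Along a geodesic of Gödel's universe, the quantity `C₂` is conserved. -/
theorem godel_C2_conserved (t r φ z : ℝ → ℝ)
    (ht : TwiceDiff t) (hr : TwiceDiff r) (hφ : TwiceDiff φ) (hz : TwiceDiff z)
    (hrpos : ∀ u, 0 < r u)
    (hgeo : GodelGeodesicEqns t r φ z) :
    ∀ u u₀ : ℝ, godelC2 t r φ u = godelC2 t r φ u₀ := by
  have main : ∀ u, HasDerivAt (godelC2 t r φ) 0 u := by
    intro u
    have hφd : HasDerivAt φ (deriv φ u) u := (hφ.1 u).hasDerivAt
    have hrd : HasDerivAt r (deriv r u) u := (hr.1 u).hasDerivAt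
    have h2r : HasDerivAt (fun v => 2 * r v) (2 * deriv r u) u := hrd.const_mul 2
    have h1 : HasDerivAt (fun v => Real.sin (φ v)) (Real.cos (φ u) * deriv φ u) u :=
      (Real.hasDerivAt_sin (φ u)).comp u hφd
    have h3 : HasDerivAt (fun v => Real.cos (φ v)) (-Real.sin (φ u) * deriv φ u) u :=
      (Real.hasDerivAt_cos (φ u)).comp u hφd
    have h2 : HasDerivAt (fun v => Real.sinh (2 * r v)) (Real.cosh (2 * r u) * (2 * deriv r u)) u :=
      by have := (Real.hasDerivAt_sinh (2 * r u)).comp u h2r; exact this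
    have h4 : HasDerivAt (fun v => Real.cosh (2 * r v)) (Real.sinh (2 * r u) * (2 * deriv r u)) u :=
      by have := (Real.hasDerivAt_cosh (2 * r u)).comp u h2r; exact this
    have hT : HasDerivAt (deriv t) (deriv (deriv t) u) u := (ht.2 u).hasDerivAt
    have hR : HasDerivAt (deriv r) (deriv (deriv r) u) u := (hr.2 u).hasDerivAt
    have hP : HasDerivAt (deriv φ) (deriv (deriv φ) u) u := (hφ.2 u).hasDerivAt
    have A := ((h1.const_mul (Real.sqrt 2)).mul h2).mul hT
    have B := h3.mul hR
    have Cp := ((((h1.mul (h4.sub_const 2)).mul h2).div_const 2).mul hP)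
    have hC := (A.add B).add Cp
    have hz : (Real.sqrt 2 * (Real.cos (φ u) * deriv φ u) * Real.sinh (2 * r u)
          + Real.sqrt 2 * Real.sin (φ u) * (Real.cosh (2 * r u) * (2 * deriv r u))) * deriv t u
          + Real.sqrt 2 * Real.sin (φ u) * Real.sinh (2 * r u) * deriv (deriv t) u
        + (-Real.sin (φ u) * deriv φ u * deriv r u + Real.cos (φ u) * deriv (deriv r) u)
      + (((Real.cos (φ u) * deriv φ u * (Real.cosh (2 * r u) - 2)
            + Real.sin (φ u) * (Real.sinh (2 * r u) * (2 * deriv r u))) * Real.sinh (2 * r u)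
            + Real.sin (φ u) * (Real.cosh (2 * r u) - 2) * (Real.cosh (2 * r u) * (2 * deriv r u))) / 2
          * deriv φ u
        + Real.sin (φ u) * (Real.cosh (2 * r u) - 2) * Real.sinh (2 * r u) / 2 * deriv (deriv φ) u)
        = 0 := by
      obtain ⟨e1, e2, e3, -⟩ := hgeo u
      have hc0 : Real.cosh (r u) ≠ 0 := (Real.cosh_pos (r u)).ne'
      have e1' : Real.cosh (r u) * deriv (deriv t) u
          + 4 * Real.sinh (r u) * deriv t u * deriv r u
          + 2 * Real.sqrt 2 * Real.sinh (r u) ^ 3 * deriv φ u * deriv r u = 0 := by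
        rw [Real.tanh_eq_sinh_div_cosh] at e1
        field_simp at e1
        linear_combination e1
      have hq : Real.sqrt 2 ^ 2 = 2 := Real.sq_sqrt (by norm_num)
      have hc : Real.cosh (r u) ^ 2 = Real.sinh (r u) ^ 2 + 1 := Real.cosh_sq (r u)
      simp only [Real.sinh_two_mul, Real.cosh_two_mul]
      linear_combination Real.cos (φ u) * e2
        + 2 * Real.sqrt 2 * Real.sinh (r u) * Real.sin (φ u) * e1'
        + (2 * Real.cosh (r u) ^ 2 - 3) * Real.sin (φ u) * e3
        + Real.sin (φ u) * (8 * Real.sqrt 2 * deriv t u * deriv r u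
            + (4 * Real.cosh (r u) ^ 2 + 8 * Real.sinh (r u) ^ 2 - 8) * deriv φ u * deriv r u) * hc
        - 4 * Real.sinh (r u) ^ 4 * Real.sin (φ u) * deriv φ u * deriv r u * hq
        + (- 2 * Real.sqrt 2 * Real.sin (φ u) * deriv t u * deriv r u
           - Real.cos (φ u) * deriv φ u ^ 2 * Real.sinh (r u) * Real.cosh (r u)
           + Real.sin (φ u) * deriv φ u * deriv r u
              * (3 - 3 * Real.cosh (r u) ^ 2 - Real.sinh (r u) ^ 2)
           - Real.sin (φ u) * deriv (deriv φ) u * Real.sinh (r u) * Real.cosh (r u)) * hc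
    simp only [Pi.mul_apply] at hC
    rw [hz] at hC
    exact hC
  intro u u₀
  exact is_const_of_deriv_eq_zero (fun v => (main v).differentiableAt)
    (fun v => (main v).deriv) u u₀
end

section
/- Let t, r, φ, z : ℝ → ℝ be twice-differentiable functions with r(u) > 0 for all u. Suppose that the functions u ↦ P_{0,1}(u), u ↦ P_{2,0}(u), u ↦ C₁(u), u ↦ C₂(u), and u ↦ z'(u) are all constant on ℝ. Then (t, r, φ, z) is a geodesic of Gödel's universe, i.e. it satisfies the four geodesic differential equations of Gödel's universe at every u. -/
open Real

/-- If `P_{0,1}`, `P_{2,0}`, `C₁`, `C₂` and `z'` are constant along a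
twice-differentiable curve with positive radial coordinate, then the curve is a
geodesic of Gödel's universe. -/
theorem godel_conserved_implies_geodesic (t r φ z : ℝ → ℝ)
    (ht : TwiceDiff t) (hr : TwiceDiff r) (hφ : TwiceDiff φ) (hz : TwiceDiff z)
    (hrpos : ∀ u, 0 < r u)
    (hP01 : ∀ u u₀ : ℝ, godelP t r φ 0 1 u = godelP t r φ 0 1 u₀)
    (hP20 : ∀ u u₀ : ℝ, godelP t r φ 2 0 u = godelP t r φ 2 0 u₀)
    (hC1 : ∀ u u₀ : ℝ, godelC1 t r φ u = godelC1 t r φ u₀)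
    (hC2 : ∀ u u₀ : ℝ, godelC2 t r φ u = godelC2 t r φ u₀)
    (hz' : ∀ u u₀ : ℝ, deriv z u = deriv z u₀) :
    GodelGeodesicEqns t r φ z := by
  obtain ⟨ht1, ht2⟩ := ht
  obtain ⟨hr1, hr2⟩ := hr
  obtain ⟨hφ1, hφ2⟩ := hφ
  obtain ⟨hz1, hz2⟩ := hz
  intro u
  have hq2 : Real.sqrt 2 * Real.sqrt 2 = 2 := Real.mul_self_sqrt (by norm_num)
  have hq0 : Real.sqrt 2 ≠ 0 := by positivity
  have hcpos : 0 < Real.cosh (r u) := Real.cosh_pos (r u)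
  have hspos : 0 < Real.sinh (r u) := Real.sinh_pos_iff.mpr (hrpos u)
  have hc2 : Real.cosh (r u) ^ 2 = Real.sinh (r u) ^ 2 + 1 := Real.cosh_sq (r u)
  have hpy : Real.sin (φ u) ^ 2 + Real.cos (φ u) ^ 2 = 1 := Real.sin_sq_add_cos_sq (φ u)
  have Hr : HasDerivAt r (deriv r u) u := (hr1 u).hasDerivAt
  have Hφ : HasDerivAt φ (deriv φ u) u := (hφ1 u).hasDerivAt
  have Ht' : HasDerivAt (deriv t) (deriv (deriv t) u) u := (ht2 u).hasDerivAt
  have Hr' : HasDerivAt (deriv r) (deriv (deriv r) u) u := (hr2 u).hasDerivAt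
  have Hφ' : HasDerivAt (deriv φ) (deriv (deriv φ) u) u := (hφ2 u).hasDerivAt
  have H2r : HasDerivAt (fun v => 2 * r v) (2 * deriv r u) u := Hr.const_mul 2
  -- clean forms of the two momenta
  have hfun1 : godelP t r φ 0 1 = fun v =>
      deriv t v + Real.sqrt 2 * Real.sinh (r v) ^ 2 * deriv φ v := by
    funext v
    unfold godelP
    field_simp
    linear_combination (-2 * Real.sinh (r v) ^ 2 * deriv φ v) * hq2
  have hfun2 : godelP t r φ 2 0 = fun v =>
      Real.cosh (r v) ^ 2 * deriv t v
        + Real.sqrt 2 / 2 * (Real.cosh (r v) ^ 2 * Real.sinh (r v) ^ 2) * deriv φ v := by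
    funext v
    unfold godelP
    field_simp
    linear_combination (-Real.cosh (r v) ^ 2 * Real.sinh (r v) ^ 2 * deriv φ v) * hq2
  -- derivatives of the conserved quantities vanish
  have hP01z : deriv (godelP t r φ 0 1) u = 0 := by
    rw [show godelP t r φ 0 1 = fun _ => godelP t r φ 0 1 0 from funext fun v => hP01 v 0]
    simp
  have hP20z : deriv (godelP t r φ 2 0) u = 0 := by
    rw [show godelP t r φ 2 0 = fun _ => godelP t r φ 2 0 0 from funext fun v => hP20 v 0]
    simp
  have hC1z : deriv (godelC1 t r φ) u = 0 := by
    rw [show godelC1 t r φ = fun _ => godelC1 t r φ 0 from funext fun v => hC1 v 0]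
    simp
  have hC2z : deriv (godelC2 t r φ) u = 0 := by
    rw [show godelC2 t r φ = fun _ => godelC2 t r φ 0 from funext fun v => hC2 v 0]
    simp
  -- compute the derivatives via HasDerivAt
  have HP01 : HasDerivAt (godelP t r φ 0 1)
      (deriv (deriv t) u
        + 2 * Real.sqrt 2 * Real.sinh (r u) * Real.cosh (r u) * deriv r u * deriv φ u
        + Real.sqrt 2 * Real.sinh (r u) ^ 2 * deriv (deriv φ) u) u := by
    rw [hfun1]
    have h := Ht'.add ((((Hr.sinh).pow 2).const_mul (Real.sqrt 2)).mul Hφ')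
    refine h.congr_deriv ?_
    simp only [Pi.pow_apply, Pi.mul_apply]
    push_cast
    ring
  have HP20 : HasDerivAt (godelP t r φ 2 0)
      (2 * Real.sinh (r u) * Real.cosh (r u) * deriv r u * deriv t u
        + Real.cosh (r u) ^ 2 * deriv (deriv t) u
        + Real.sqrt 2 * (Real.sinh (r u) ^ 3 * Real.cosh (r u)
            + Real.sinh (r u) * Real.cosh (r u) ^ 3) * deriv r u * deriv φ u
        + Real.sqrt 2 / 2 * Real.cosh (r u) ^ 2 * Real.sinh (r u) ^ 2 * deriv (deriv φ) u) u := by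
    rw [hfun2]
    have h := (((Hr.cosh).pow 2).mul Ht').add
      (((((Hr.cosh).pow 2).mul ((Hr.sinh).pow 2)).const_mul (Real.sqrt 2 / 2)).mul Hφ')
    refine h.congr_deriv ?_
    simp only [Pi.pow_apply, Pi.mul_apply]
    push_cast
    ring
  have h1 : deriv (deriv t) u
      + 2 * Real.sqrt 2 * Real.sinh (r u) * Real.cosh (r u) * deriv r u * deriv φ u
      + Real.sqrt 2 * Real.sinh (r u) ^ 2 * deriv (deriv φ) u = 0 :=
    HP01.deriv.symm.trans hP01z
  have h2 : 2 * Real.sinh (r u) * Real.cosh (r u) * deriv r u * deriv t u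
      + Real.cosh (r u) ^ 2 * deriv (deriv t) u
      + Real.sqrt 2 * (Real.sinh (r u) ^ 3 * Real.cosh (r u)
          + Real.sinh (r u) * Real.cosh (r u) ^ 3) * deriv r u * deriv φ u
      + Real.sqrt 2 / 2 * Real.cosh (r u) ^ 2 * Real.sinh (r u) ^ 2 * deriv (deriv φ) u = 0 :=
    HP20.deriv.symm.trans hP20z
  -- derivatives of C1, C2
  have HC1 := ((((Hφ.cos.const_mul (-(Real.sqrt 2))).mul (H2r.sinh)).mul Ht').add
      ((Hφ.sin).mul Hr')).sub
      (((((Hφ.cos.mul ((H2r.cosh).sub_const 2)).mul (H2r.sinh)).div_const 2).mul Hφ'))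
  have HC2 := ((((Hφ.sin.const_mul (Real.sqrt 2)).mul (H2r.sinh)).mul Ht').add
      ((Hφ.cos).mul Hr')).add
      (((((Hφ.sin.mul ((H2r.cosh).sub_const 2)).mul (H2r.sinh)).div_const 2).mul Hφ'))
  have hD1 := (show HasDerivAt (godelC1 t r φ) _ u from HC1).deriv.symm.trans hC1z
  have hD2 := (show HasDerivAt (godelC2 t r φ) _ u from HC2).deriv.symm.trans hC2z
  simp only [Pi.mul_apply] at hD1 hD2
  rw [Real.sinh_two_mul, Real.cosh_two_mul] at hD1 hD2
  refine ⟨?_, ?_, ?_, ?_⟩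
  · -- t equation
    have key : Real.cosh (r u) * (Real.cosh (r u) * deriv (deriv t) u
        + 4 * Real.sinh (r u) * deriv t u * deriv r u
        + 2 * Real.sqrt 2 * Real.sinh (r u) ^ 3 * deriv φ u * deriv r u) = 0 := by
      linear_combination 2 * h2 - Real.cosh (r u) ^ 2 * h1
    have hG1 : Real.cosh (r u) * deriv (deriv t) u
        + 4 * Real.sinh (r u) * deriv t u * deriv r u
        + 2 * Real.sqrt 2 * Real.sinh (r u) ^ 3 * deriv φ u * deriv r u = 0 :=
      (mul_eq_zero.mp key).resolve_left hcpos.ne'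
    rw [Real.tanh_eq_sinh_div_cosh]
    field_simp
    linear_combination hG1
  · -- r equation
    linear_combination Real.sin (φ u) * hD1 + Real.cos (φ u) * hD2
      - (deriv (deriv r) u
          - 2 * Real.cosh (r u) * Real.sinh (r u) * deriv φ u ^ 2
          + Real.cosh (r u) * Real.sinh (r u) ^ 3 * deriv φ u ^ 2
          + Real.cosh (r u) ^ 3 * Real.sinh (r u) * deriv φ u ^ 2
          + 2 * Real.sqrt 2 * Real.cosh (r u) * Real.sinh (r u) * deriv t u * deriv φ u) * hpy
      + (Real.cosh (r u) * Real.sinh (r u) * deriv φ u ^ 2) * hc2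
  · -- φ equation
    have key : Real.sqrt 2 * Real.cosh (r u) * Real.sinh (r u)
        * (deriv (deriv φ) u * Real.sinh (r u) * Real.cosh (r u)
          - 2 * Real.sqrt 2 * deriv t u * deriv r u + 2 * deriv φ u * deriv r u) = 0 := by
      linear_combination (2 * Real.cosh (r u) ^ 2) * h1 - 2 * h2
        - (2 * Real.cosh (r u) * Real.sinh (r u) * deriv t u * deriv r u) * hq2
        - (2 * Real.sqrt 2 * Real.cosh (r u) * Real.sinh (r u) * deriv r u * deriv φ u) * hc2
    have hne : Real.sqrt 2 * Real.cosh (r u) * Real.sinh (r u) ≠ 0 := by positivity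
    exact (mul_eq_zero.mp key).resolve_left hne
  · -- z equation
    rw [show deriv z = fun _ => deriv z 0 from funext fun v => hz' v 0]
    simp
end

section
/- Let t, r, φ, z : ℝ → ℝ be twice-differentiable functions with r(u) > 0 for all u. Then (t, r, φ, z) is a geodesic of Gödel's universe if and only if the functions u ↦ P_{ρ₁,ρ₂}(u) for all ρ₁, ρ₂ ∈ ℝ, u ↦ C₁(u), u ↦ C₂(u), and u ↦ z'(u) are constant on ℝ. -/
open Real

/- ### Auxiliary material -/

/-- Formula for the derivative of `godelP`. -/
noncomputable def dPfun (t r φ : ℝ → ℝ) (ρ₁ ρ₂ u : ℝ) : ℝ :=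
  ρ₁ * Real.cosh (r u) * Real.sinh (r u) * deriv r u * deriv t u
    + (ρ₂ + ρ₁ * Real.cosh (r u) ^ 2 / 2) * deriv (deriv t) u
    + (2 * ρ₁ * Real.cosh (r u) * Real.sinh (r u) ^ 3
        + 2 * Real.sinh (r u) * Real.cosh (r u) * (ρ₁ * Real.cosh (r u) ^ 2 + 4 * ρ₂))
        * deriv r u * (Real.sqrt 2 / 4) * deriv φ u
    + (ρ₁ * Real.cosh (r u) ^ 2 + 4 * ρ₂) * Real.sinh (r u) ^ 2 * (Real.sqrt 2 / 4)
        * deriv (deriv φ) u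

/-- Formula for the derivative of `godelC1`. -/
noncomputable def dC1fun (t r φ : ℝ → ℝ) (u : ℝ) : ℝ :=
  -(2 * Real.sqrt 2) * (Real.cosh (r u) ^ 2 + Real.sinh (r u) ^ 2) * deriv r u
      * Real.cos (φ u) * deriv t u
    + 2 * Real.sqrt 2 * Real.sinh (r u) * Real.cosh (r u) * Real.sin (φ u) * deriv φ u
      * deriv t u
    - 2 * Real.sqrt 2 * Real.sinh (r u) * Real.cosh (r u) * Real.cos (φ u)
      * deriv (deriv t) u
    + Real.cos (φ u) * deriv φ u * deriv r u
    + Real.sin (φ u) * deriv (deriv r) u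
    - ((Real.cosh (r u) ^ 2 + Real.sinh (r u) ^ 2) * (2 * Real.cosh (r u) ^ 2 - 3)
        + 4 * Real.sinh (r u) ^ 2 * Real.cosh (r u) ^ 2) * deriv r u * Real.cos (φ u)
      * deriv φ u
    + Real.sinh (r u) * Real.cosh (r u) * (2 * Real.cosh (r u) ^ 2 - 3) * Real.sin (φ u)
      * deriv φ u ^ 2
    - Real.sinh (r u) * Real.cosh (r u) * (2 * Real.cosh (r u) ^ 2 - 3) * Real.cos (φ u)
      * deriv (deriv φ) u

/-- Formula for the derivative of `godelC2`. -/
noncomputable def dC2fun (t r φ : ℝ → ℝ) (u : ℝ) : ℝ :=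
  2 * Real.sqrt 2 * (Real.cosh (r u) ^ 2 + Real.sinh (r u) ^ 2) * deriv r u
      * Real.sin (φ u) * deriv t u
    + 2 * Real.sqrt 2 * Real.sinh (r u) * Real.cosh (r u) * Real.cos (φ u) * deriv φ u
      * deriv t u
    + 2 * Real.sqrt 2 * Real.sinh (r u) * Real.cosh (r u) * Real.sin (φ u)
      * deriv (deriv t) u
    - Real.sin (φ u) * deriv φ u * deriv r u
    + Real.cos (φ u) * deriv (deriv r) u
    + ((Real.cosh (r u) ^ 2 + Real.sinh (r u) ^ 2) * (2 * Real.cosh (r u) ^ 2 - 3)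
        + 4 * Real.sinh (r u) ^ 2 * Real.cosh (r u) ^ 2) * deriv r u * Real.sin (φ u)
      * deriv φ u
    + Real.sinh (r u) * Real.cosh (r u) * (2 * Real.cosh (r u) ^ 2 - 3) * Real.cos (φ u)
      * deriv φ u ^ 2
    + Real.sinh (r u) * Real.cosh (r u) * (2 * Real.cosh (r u) ^ 2 - 3) * Real.sin (φ u)
      * deriv (deriv φ) u

lemma sqrt2_sq : Real.sqrt 2 ^ 2 = 2 := Real.sq_sqrt (by norm_num)

lemma hasDerivAt_godelP {t r φ : ℝ → ℝ} (ht : TwiceDiff t) (hr : TwiceDiff r)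
    (hφ : TwiceDiff φ) (ρ₁ ρ₂ u : ℝ) :
    HasDerivAt (godelP t r φ ρ₁ ρ₂) (dPfun t r φ ρ₁ ρ₂ u) u := by
  have hc := ((hr.1 u).hasDerivAt).cosh
  have hs := ((hr.1 u).hasDerivAt).sinh
  have hT2 := (ht.2 u).hasDerivAt
  have hF2 := (hφ.2 u).hasDerivAt
  have h1 := ((((hc.pow 2).const_mul ρ₁).div_const 2).const_add ρ₂).mul hT2
  have h2 := (((((hc.pow 2).const_mul ρ₁).add_const (4 * ρ₂)).mul (hs.pow 2)).div_const
      (2 * Real.sqrt 2)).mul hF2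
  have h := h1.add h2
  refine h.congr_deriv ?_
  simp only [Pi.mul_apply, Pi.pow_apply, Pi.add_apply, Pi.sub_apply, Pi.div_apply]
  have h1 : (2 * Real.sqrt 2 : ℝ) * (Real.sqrt 2 / 4) = 1 := by
    linear_combination (1 / 2 : ℝ) * sqrt2_sq
  have hinv : (2 * Real.sqrt 2 : ℝ)⁻¹ = Real.sqrt 2 / 4 := inv_eq_of_mul_eq_one_right h1
  unfold dPfun
  simp only [div_eq_mul_inv, hinv]
  push_cast
  ring

lemma hasDerivAt_godelC1 {t r φ : ℝ → ℝ} (ht : TwiceDiff t) (hr : TwiceDiff r)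
    (hφ : TwiceDiff φ) (u : ℝ) :
    HasDerivAt (godelC1 t r φ) (dC1fun t r φ u) u := by
  have hsin := ((hφ.1 u).hasDerivAt).sin
  have hcos := ((hφ.1 u).hasDerivAt).cos
  have h2r := (hr.1 u).hasDerivAt.const_mul (2 : ℝ)
  have hs2 := h2r.sinh
  have hc2 := h2r.cosh
  have hT2 := (ht.2 u).hasDerivAt
  have hR2 := (hr.2 u).hasDerivAt
  have hF2 := (hφ.2 u).hasDerivAt
  have h1 := ((hcos.const_mul (-(Real.sqrt 2))).mul hs2).mul hT2
  have h2 := hsin.mul hR2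
  have h3 := (((hcos.mul (hc2.sub_const 2)).mul hs2).div_const 2).mul hF2
  have h := (h1.add h2).sub h3
  refine h.congr_deriv ?_
  simp only [Pi.mul_apply, Pi.pow_apply, Pi.add_apply, Pi.sub_apply, Pi.div_apply]
  unfold dC1fun
  rw [Real.sinh_two_mul, Real.cosh_two_mul]
  linear_combination ((Real.cosh (r u) ^ 2 + Real.sinh (r u) ^ 2) * Real.cos (φ u)
      * deriv r u * deriv φ u
    + Real.sinh (r u) * Real.cosh (r u) * Real.cos (φ u) * deriv (deriv φ) u
    - Real.sinh (r u) * Real.cosh (r u) * Real.sin (φ u) * deriv φ u ^ 2) * Real.cosh_sq (r u)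

lemma hasDerivAt_godelC2 {t r φ : ℝ → ℝ} (ht : TwiceDiff t) (hr : TwiceDiff r)
    (hφ : TwiceDiff φ) (u : ℝ) :
    HasDerivAt (godelC2 t r φ) (dC2fun t r φ u) u := by
  have hsin := ((hφ.1 u).hasDerivAt).sin
  have hcos := ((hφ.1 u).hasDerivAt).cos
  have h2r := (hr.1 u).hasDerivAt.const_mul (2 : ℝ)
  have hs2 := h2r.sinh
  have hc2 := h2r.cosh
  have hT2 := (ht.2 u).hasDerivAt
  have hR2 := (hr.2 u).hasDerivAt
  have hF2 := (hφ.2 u).hasDerivAt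
  have h1 := ((hsin.const_mul (Real.sqrt 2)).mul hs2).mul hT2
  have h2 := hcos.mul hR2
  have h3 := (((hsin.mul (hc2.sub_const 2)).mul hs2).div_const 2).mul hF2
  have h := (h1.add h2).add h3
  refine h.congr_deriv ?_
  simp only [Pi.mul_apply, Pi.pow_apply, Pi.add_apply, Pi.sub_apply, Pi.div_apply]
  unfold dC2fun
  rw [Real.sinh_two_mul, Real.cosh_two_mul]
  linear_combination (-((Real.cosh (r u) ^ 2 + Real.sinh (r u) ^ 2) * Real.sin (φ u)
      * deriv r u * deriv φ u)
    - Real.sinh (r u) * Real.cosh (r u) * Real.cos (φ u) * deriv φ u ^ 2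
    - Real.sinh (r u) * Real.cosh (r u) * Real.sin (φ u) * deriv (deriv φ) u) * Real.cosh_sq (r u)

/-- A function that takes equal values everywhere has zero derivative. -/
lemma deriv_zero_of_const {f : ℝ → ℝ} (h : ∀ u u₀ : ℝ, f u = f u₀) (u : ℝ) :
    deriv f u = 0 := by
  have : f = fun _ => f 0 := funext fun x => h x 0
  rw [this]
  simp

/- ### Pointwise algebra lemmas -/

lemma aux_P_fwd (w s c T R F T2 F2 p1 p2 : ℝ)
    (hw : w ^ 2 = 2) (hc : c ^ 2 = s ^ 2 + 1) (hc0 : c ≠ 0)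
    (e1 : c * T2 + 4 * s * T * R + 2 * w * s ^ 3 * F * R = 0)
    (e3 : F2 * s * c - 2 * w * T * R + 2 * F * R = 0) :
    p1 * c * s * R * T + (p2 + p1 * c ^ 2 / 2) * T2
      + (2 * p1 * c * s ^ 3 + 2 * s * c * (p1 * c ^ 2 + 4 * p2)) * R * (w / 4) * F
      + (p1 * c ^ 2 + 4 * p2) * s ^ 2 * (w / 4) * F2 = 0 := by
  have h : c * (p1 * c * s * R * T + (p2 + p1 * c ^ 2 / 2) * T2
      + (2 * p1 * c * s ^ 3 + 2 * s * c * (p1 * c ^ 2 + 4 * p2)) * R * (w / 4) * F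
      + (p1 * c ^ 2 + 4 * p2) * s ^ 2 * (w / 4) * F2) = 0 := by
    linear_combination (p2 + p1 * c ^ 2 / 2) * e1 + ((p1 * c ^ 2 + 4 * p2) * s * (w / 4)) * e3
      + (2 * s * T * R * p2 + s * c ^ 2 * T * R * p1 / 2) * hw
      + (2 * w * s * R * F * p2 + w * s * c ^ 2 * R * F * p1 / 2) * hc
  rcases mul_eq_zero.mp h with h' | h'
  · exact absurd h' hc0
  · exact h'

lemma aux_C1_fwd (w s c S C T R F T2 R2 F2 : ℝ)
    (hw : w ^ 2 = 2) (hc : c ^ 2 = s ^ 2 + 1)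
    (e1 : c * T2 + 4 * s * T * R + 2 * w * s ^ 3 * F * R = 0)
    (e2 : R2 + 2 * w * s * c * T * F + s * c * (2 * c ^ 2 - 3) * F ^ 2 = 0)
    (e3 : F2 * s * c - 2 * w * T * R + 2 * F * R = 0) :
    -(2 * w) * (c ^ 2 + s ^ 2) * R * C * T + 2 * w * s * c * S * F * T
      - 2 * w * s * c * C * T2 + C * F * R + S * R2
      - ((c ^ 2 + s ^ 2) * (2 * c ^ 2 - 3) + 4 * s ^ 2 * c ^ 2) * R * C * F
      + s * c * (2 * c ^ 2 - 3) * S * F ^ 2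
      - s * c * (2 * c ^ 2 - 3) * C * F2 = 0 := by
  linear_combination (-(2 * w * s * C)) * e1 + S * e2 + (-(2 * c ^ 2 - 3) * C) * e3
    + (4 * s ^ 4 * C * R * F) * hw
    + (5 * C * R * F - 2 * c ^ 2 * C * R * F - 8 * s ^ 2 * C * R * F - 6 * w * C * T * R) * hc

lemma aux_C2_fwd (w s c S C T R F T2 R2 F2 : ℝ)
    (hw : w ^ 2 = 2) (hc : c ^ 2 = s ^ 2 + 1)
    (e1 : c * T2 + 4 * s * T * R + 2 * w * s ^ 3 * F * R = 0)
    (e2 : R2 + 2 * w * s * c * T * F + s * c * (2 * c ^ 2 - 3) * F ^ 2 = 0)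
    (e3 : F2 * s * c - 2 * w * T * R + 2 * F * R = 0) :
    2 * w * (c ^ 2 + s ^ 2) * R * S * T + 2 * w * s * c * C * F * T
      + 2 * w * s * c * S * T2 - S * F * R + C * R2
      + ((c ^ 2 + s ^ 2) * (2 * c ^ 2 - 3) + 4 * s ^ 2 * c ^ 2) * R * S * F
      + s * c * (2 * c ^ 2 - 3) * C * F ^ 2
      + s * c * (2 * c ^ 2 - 3) * S * F2 = 0 := by
  linear_combination (2 * w * s * S) * e1 + C * e2 + ((2 * c ^ 2 - 3) * S) * e3
    + (-(4 * s ^ 4 * S * R * F)) * hw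
    + (-(5 * S * R * F) + 2 * c ^ 2 * S * R * F + 8 * s ^ 2 * S * R * F + 6 * w * S * T * R) * hc

/-- A twice-differentiable curve with positive radial coordinate is a
geodesic of Gödel's universe if and only if all the momenta `P_{ρ₁,ρ₂}`, the
quantities `C₁`, `C₂` and `z'` are constant. -/
theorem godel_geodesic_iff_conserved (t r φ z : ℝ → ℝ)
    (ht : TwiceDiff t) (hr : TwiceDiff r) (hφ : TwiceDiff φ) (hz : TwiceDiff z)
    (hrpos : ∀ u, 0 < r u) :
    GodelGeodesicEqns t r φ z ↔
      ((∀ (ρ₁ ρ₂ : ℝ) (u u₀ : ℝ), godelP t r φ ρ₁ ρ₂ u = godelP t r φ ρ₁ ρ₂ u₀)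
        ∧ (∀ u u₀ : ℝ, godelC1 t r φ u = godelC1 t r φ u₀)
        ∧ (∀ u u₀ : ℝ, godelC2 t r φ u = godelC2 t r φ u₀)
        ∧ (∀ u u₀ : ℝ, deriv z u = deriv z u₀)) := by
  have hw := sqrt2_sq
  have hw0 : Real.sqrt 2 ≠ 0 := by positivity
  constructor
  · intro hG
    -- pointwise facts
    have key : ∀ u : ℝ,
        (Real.cosh (r u) * deriv (deriv t) u + 4 * Real.sinh (r u) * deriv t u * deriv r u
          + 2 * Real.sqrt 2 * Real.sinh (r u) ^ 3 * deriv φ u * deriv r u = 0)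
        ∧ (deriv (deriv r) u
          + 2 * Real.sqrt 2 * Real.sinh (r u) * Real.cosh (r u) * deriv t u * deriv φ u
          + Real.sinh (r u) * Real.cosh (r u) * (2 * Real.cosh (r u) ^ 2 - 3)
            * (deriv φ u) ^ 2 = 0)
        ∧ (deriv (deriv φ) u * Real.sinh (r u) * Real.cosh (r u)
          - 2 * Real.sqrt 2 * deriv t u * deriv r u + 2 * deriv φ u * deriv r u = 0) := by
      intro u
      obtain ⟨h1, h2, h3, _⟩ := hG u
      have hc0 : Real.cosh (r u) ≠ 0 := ne_of_gt (Real.cosh_pos (r u))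
      rw [Real.tanh_eq_sinh_div_cosh] at h1
      refine ⟨?_, h2, h3⟩
      field_simp at h1
      linear_combination h1
    refine ⟨?_, ?_, ?_, ?_⟩
    · intro ρ₁ ρ₂ u u₀
      refine is_const_of_deriv_eq_zero (fun x => (hasDerivAt_godelP ht hr hφ ρ₁ ρ₂ x).differentiableAt) (fun x => ?_) u u₀
      rw [(hasDerivAt_godelP ht hr hφ ρ₁ ρ₂ x).deriv]
      obtain ⟨h1, h2, h3⟩ := key x
      have := aux_P_fwd (Real.sqrt 2) (Real.sinh (r x)) (Real.cosh (r x)) (deriv t x)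
        (deriv r x) (deriv φ x) (deriv (deriv t) x) (deriv (deriv φ) x) ρ₁ ρ₂
        hw (Real.cosh_sq _) (ne_of_gt (Real.cosh_pos _)) (by linear_combination h1)
        (by linear_combination h3)
      unfold dPfun
      linear_combination this
    · intro u u₀
      refine is_const_of_deriv_eq_zero (fun x => (hasDerivAt_godelC1 ht hr hφ x).differentiableAt) (fun x => ?_) u u₀
      rw [(hasDerivAt_godelC1 ht hr hφ x).deriv]
      obtain ⟨h1, h2, h3⟩ := key x
      have := aux_C1_fwd (Real.sqrt 2) (Real.sinh (r x)) (Real.cosh (r x)) (Real.sin (φ x))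
        (Real.cos (φ x)) (deriv t x) (deriv r x) (deriv φ x) (deriv (deriv t) x)
        (deriv (deriv r) x) (deriv (deriv φ) x)
        hw (Real.cosh_sq _) (by linear_combination h1) (by linear_combination h2)
        (by linear_combination h3)
      unfold dC1fun
      linear_combination this
    · intro u u₀
      refine is_const_of_deriv_eq_zero (fun x => (hasDerivAt_godelC2 ht hr hφ x).differentiableAt) (fun x => ?_) u u₀
      rw [(hasDerivAt_godelC2 ht hr hφ x).deriv]
      obtain ⟨h1, h2, h3⟩ := key x
      have := aux_C2_fwd (Real.sqrt 2) (Real.sinh (r x)) (Real.cosh (r x)) (Real.sin (φ x))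
        (Real.cos (φ x)) (deriv t x) (deriv r x) (deriv φ x) (deriv (deriv t) x)
        (deriv (deriv r) x) (deriv (deriv φ) x)
        hw (Real.cosh_sq _) (by linear_combination h1) (by linear_combination h2)
        (by linear_combination h3)
      unfold dC2fun
      linear_combination this
    · intro u u₀
      exact is_const_of_deriv_eq_zero hz.2 (fun x => (hG x).2.2.2) u u₀
  · rintro ⟨hP, hC1, hC2, hz'⟩
    intro u
    set w := Real.sqrt 2 with hwdef
    set s := Real.sinh (r u) with hsdef
    set c := Real.cosh (r u) with hcdef
    set S := Real.sin (φ u) with hSdef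
    set C := Real.cos (φ u) with hCdef
    set T := deriv t u with hTdef
    set R := deriv r u with hRdef
    set F := deriv φ u with hFdef
    have hc : c ^ 2 = s ^ 2 + 1 := Real.cosh_sq _
    have hc0 : c ≠ 0 := ne_of_gt (Real.cosh_pos _)
    have hs0 : s ≠ 0 := ne_of_gt (Real.sinh_pos_iff.mpr (hrpos u))
    have hSC : S ^ 2 + C ^ 2 = 1 := Real.sin_sq_add_cos_sq _
    -- derivative of each conserved quantity is zero
    have hX : dPfun t r φ 1 0 u = 0 := by
      rw [← (hasDerivAt_godelP ht hr hφ 1 0 u).deriv]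
      exact deriv_zero_of_const (hP 1 0) u
    have hY : dPfun t r φ 0 1 u = 0 := by
      rw [← (hasDerivAt_godelP ht hr hφ 0 1 u).deriv]
      exact deriv_zero_of_const (hP 0 1) u
    have hD1 : dC1fun t r φ u = 0 := by
      rw [← (hasDerivAt_godelC1 ht hr hφ u).deriv]
      exact deriv_zero_of_const hC1 u
    have hD2 : dC2fun t r φ u = 0 := by
      rw [← (hasDerivAt_godelC2 ht hr hφ u).deriv]
      exact deriv_zero_of_const hC2 u
    unfold dPfun at hX hY
    unfold dC1fun at hD1
    unfold dC2fun at hD2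
    -- polynomial forms of the geodesic equations
    have e1p : c ^ 2 * deriv (deriv t) u + 4 * c * s * T * R + 2 * w * c * s ^ 3 * F * R = 0 := by
      linear_combination 4 * hX - c ^ 2 * hY
    have e1q : c * deriv (deriv t) u + 4 * s * T * R + 2 * w * s ^ 3 * F * R = 0 := by
      have h : c * (c * deriv (deriv t) u + 4 * s * T * R + 2 * w * s ^ 3 * F * R) = 0 := by
        linear_combination e1p
      rcases mul_eq_zero.mp h with h' | h'
      · exact absurd h' hc0
      · exact h'
    have e3 : deriv (deriv φ) u * s * c - 2 * w * T * R + 2 * F * R = 0 := by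
      have h : (-(c * s * w / 4)) * (deriv (deriv φ) u * s * c - 2 * w * T * R + 2 * F * R)
          = 0 := by
        linear_combination hX - (c ^ 2 / 2) * hY + (s * c * T * R / 2) * hw
          + (w * s * c * R * F / 2) * hc
      have hne : (-(c * s * w / 4)) ≠ 0 := by
        simp only [ne_eq, neg_eq_zero, div_eq_zero_iff]
        push_neg
        exact ⟨mul_ne_zero (mul_ne_zero hc0 hs0) hw0, by norm_num⟩
      rcases mul_eq_zero.mp h with h' | h'
      · exact absurd h' hne
      · exact h'
    have e2 : deriv (deriv r) u + 2 * w * s * c * T * F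
        + s * c * (2 * c ^ 2 - 3) * F ^ 2 = 0 := by
      linear_combination S * hD1 + C * hD2
        + (2 * s * c * F ^ 2 - 2 * s * c * C ^ 2 * F ^ 2 - 2 * s * c * S ^ 2 * F ^ 2) * hc
        + (-(deriv (deriv r) u) + s * c * F ^ 2 - 2 * s ^ 3 * c * F ^ 2
            - 2 * w * s * c * T * F) * hSC
    refine ⟨?_, by linear_combination e2, by linear_combination e3, ?_⟩
    · rw [Real.tanh_eq_sinh_div_cosh]
      rw [← hsdef, ← hcdef]
      field_simp
      linear_combination e1q
    · have : deriv z = fun _ => deriv z 0 := funext fun x => hz' x 0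
      rw [show deriv (deriv z) = deriv (fun _ => deriv z 0) by rw [← this]]
      simp
end

section
/- Let t, r, φ, z : ℝ → ℝ be a geodesic of Gödel's universe, and fix u₀ ∈ ℝ. Set A = P_{2,0}(u₀) and B = P_{0,1}(u₀). Then for every u ∈ ℝ, t'(u) = 2A/cosh(r(u))² − B. -/
open Real

/-- Along a geodesic, `t' = 2A/cosh(r)² − B` where `A = P_{2,0}(u₀)` and
`B = P_{0,1}(u₀)`. -/
theorem godel_tdot_formula (t r φ z : ℝ → ℝ)
    (ht : TwiceDiff t) (hr : TwiceDiff r) (hφ : TwiceDiff φ) (hz : TwiceDiff z)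
    (hrpos : ∀ u, 0 < r u)
    (hgeo : GodelGeodesicEqns t r φ z)
    (u₀ : ℝ) (A B : ℝ)
    (hA : A = godelP t r φ 2 0 u₀) (hB : B = godelP t r φ 0 1 u₀) :
    ∀ u : ℝ, deriv t u = 2 * A / Real.cosh (r u) ^ 2 - B := by
  have hs : Real.sqrt 2 * Real.sqrt 2 = 2 := Real.mul_self_sqrt (by norm_num)
  have hs0 : Real.sqrt 2 ≠ 0 := by positivity
  -- conserved quantity f
  have hFd : ∀ u : ℝ, HasDerivAt
      (fun u => Real.cosh (r u) ^ 2 * deriv t u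
        + Real.cosh (r u) ^ 2 * Real.sinh (r u) ^ 2 * deriv φ u / Real.sqrt 2) (0 : ℝ) u := by
    intro u
    have hC : Real.cosh (r u) ≠ 0 := (Real.cosh_pos (r u)).ne'
    have hCS : Real.cosh (r u) ^ 2 = Real.sinh (r u) ^ 2 + 1 := Real.cosh_sq (r u)
    have e1 := (hgeo u).1
    rw [Real.tanh_eq_sinh_div_cosh] at e1
    have e3 := (hgeo u).2.2.1
    have hrd := (hr.1 u).hasDerivAt
    have hcosh : HasDerivAt (fun u => Real.cosh (r u)) (Real.sinh (r u) * deriv r u) u :=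
      (Real.hasDerivAt_cosh (r u)).comp u hrd
    have hsinh : HasDerivAt (fun u => Real.sinh (r u)) (Real.cosh (r u) * deriv r u) u :=
      (Real.hasDerivAt_sinh (r u)).comp u hrd
    have hc2 := hcosh.pow 2
    have hs2 := hsinh.pow 2
    have ht'' := (ht.2 u).hasDerivAt
    have hφ'' := (hφ.2 u).hasDerivAt
    have H := (hc2.mul ht'').add (((hc2.mul hs2).mul hφ'').div_const (Real.sqrt 2))
    refine H.congr_deriv (Eq.symm ?_)
    have e1' : Real.cosh (r u) * deriv (deriv t) u + 4 * Real.sinh (r u) * deriv t u * deriv r u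
        + 2 * Real.sqrt 2 * Real.sinh (r u) ^ 3 * deriv φ u * deriv r u = 0 := by
      field_simp at e1; linear_combination e1
    push_cast
    simp only [Pi.pow_apply, Pi.mul_apply]
    field_simp
    linear_combination (-(Real.sqrt 2 * Real.cosh (r u))) * e1'
      + (-(Real.cosh (r u) * Real.sinh (r u))) * e3
      + (-2 * Real.cosh (r u) * Real.sinh (r u) * deriv φ u * deriv r u) * hCS
      + (2 * Real.cosh (r u) * Real.sinh (r u) ^ 3 * deriv φ u * deriv r u) * hs
  -- conserved quantity g
  have hGd : ∀ u : ℝ, HasDerivAt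
      (fun u => deriv t u + Real.sqrt 2 * (Real.sinh (r u) ^ 2 * deriv φ u)) (0 : ℝ) u := by
    intro u
    have hC : Real.cosh (r u) ≠ 0 := (Real.cosh_pos (r u)).ne'
    have hCS : Real.cosh (r u) ^ 2 = Real.sinh (r u) ^ 2 + 1 := Real.cosh_sq (r u)
    have e1 := (hgeo u).1
    rw [Real.tanh_eq_sinh_div_cosh] at e1
    have e3 := (hgeo u).2.2.1
    have hrd := (hr.1 u).hasDerivAt
    have hsinh : HasDerivAt (fun u => Real.sinh (r u)) (Real.cosh (r u) * deriv r u) u :=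
      (Real.hasDerivAt_sinh (r u)).comp u hrd
    have hs2 := hsinh.pow 2
    have ht'' := (ht.2 u).hasDerivAt
    have hφ'' := (hφ.2 u).hasDerivAt
    have H := ht''.add (((hs2.mul hφ'').const_mul (Real.sqrt 2)))
    refine H.congr_deriv (Eq.symm ?_)
    have e1' : Real.cosh (r u) * deriv (deriv t) u + 4 * Real.sinh (r u) * deriv t u * deriv r u
        + 2 * Real.sqrt 2 * Real.sinh (r u) ^ 3 * deriv φ u * deriv r u = 0 := by
      field_simp at e1; linear_combination e1
    have h2 : Real.cosh (r u) * (deriv (deriv t) u + Real.sqrt 2 *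
        (((2 : ℕ) * Real.sinh (r u) ^ 1 * (Real.cosh (r u) * deriv r u)) * deriv φ u
          + Real.sinh (r u) ^ 2 * deriv (deriv φ) u)) = 0 := by
      push_cast
      linear_combination e1' + (Real.sqrt 2 * Real.sinh (r u)) * e3
        + (2 * Real.sqrt 2 * Real.sinh (r u) * deriv φ u * deriv r u) * hCS
        + (2 * Real.sinh (r u) * deriv t u * deriv r u) * hs
    rcases mul_eq_zero.1 h2 with h | h
    · exact absurd h hC
    · exact h.symm
  -- constancy
  have hFdiff : Differentiable ℝ (fun u => Real.cosh (r u) ^ 2 * deriv t u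
      + Real.cosh (r u) ^ 2 * Real.sinh (r u) ^ 2 * deriv φ u / Real.sqrt 2) :=
    fun u => (hFd u).differentiableAt
  have hGdiff : Differentiable ℝ (fun u => deriv t u
      + Real.sqrt 2 * (Real.sinh (r u) ^ 2 * deriv φ u)) :=
    fun u => (hGd u).differentiableAt
  intro u
  have hFc := is_const_of_deriv_eq_zero hFdiff (fun x => (hFd x).deriv) u u₀
  have hGc := is_const_of_deriv_eq_zero hGdiff (fun x => (hGd x).deriv) u u₀
  have hC : Real.cosh (r u) ≠ 0 := (Real.cosh_pos (r u)).ne'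
  have hC0 : Real.cosh (r u₀) ≠ 0 := (Real.cosh_pos (r u₀)).ne'
  rw [hA, hB]
  unfold godelP
  field_simp at hFc hGc ⊢
  linear_combination 4 * hFc
    - (2 * Real.sqrt 2 * Real.cosh (r u) ^ 2) * hGc
    + (2 * Real.cosh (r u) ^ 2
        * (Real.sinh (r u) ^ 2 * deriv φ u - Real.sinh (r u₀) ^ 2 * deriv φ u₀)) * hs
end

section
/- Let t, r, φ, z : ℝ → ℝ be a geodesic of Gödel's universe, and fix u₀ ∈ ℝ. Set A = P_{2,0}(u₀) and B = P_{0,1}(u₀). Then for every u ∈ ℝ, φ'(u) = (√2/sinh(r(u))²)·(B − A/cosh(r(u))²). -/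
open Real

theorem godelP_hasDerivAt (t r φ z : ℝ → ℝ)
    (ht : TwiceDiff t) (hr : TwiceDiff r) (hφ : TwiceDiff φ)
    (hrpos : ∀ u, 0 < r u) (hgeo : GodelGeodesicEqns t r φ z) (ρ₁ ρ₂ : ℝ) (u : ℝ) :
    HasDerivAt (godelP t r φ ρ₁ ρ₂) 0 u := by
  have hR : HasDerivAt r (deriv r u) u := (hr.1 u).hasDerivAt
  have hC := hR.cosh
  have hS := hR.sinh
  have hT' : HasDerivAt (deriv t) (deriv (deriv t) u) u := (ht.2 u).hasDerivAt
  have hF' : HasDerivAt (deriv φ) (deriv (deriv φ) u) u := (hφ.2 u).hasDerivAt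
  have ha := (((hC.pow 2).const_mul ρ₁).div_const 2).const_add ρ₂
  have hb := ((((hC.pow 2).const_mul ρ₁).add_const (4*ρ₂)).mul (hS.pow 2)).div_const (2*Real.sqrt 2)
  have h := (ha.mul hT').add (hb.mul hF')
  have hCpos : 0 < Real.cosh (r u) := Real.cosh_pos (r u)
  have hSpos : 0 < Real.sinh (r u) := Real.sinh_pos_iff.2 (hrpos u)
  have hs2 : Real.sqrt 2 ^ 2 = 2 := Real.sq_sqrt (by norm_num)
  have hs2pos : 0 < Real.sqrt 2 := Real.sqrt_pos.2 (by norm_num)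
  have hpyth : Real.cosh (r u) ^ 2 - Real.sinh (r u) ^ 2 = 1 := Real.cosh_sq_sub_sinh_sq (r u)
  have hT1 : deriv (deriv t) u = -(4 * (Real.sinh (r u)/Real.cosh (r u)) * deriv t u * deriv r u)
      - 2 * Real.sqrt 2 * (Real.sinh (r u) ^ 3 / Real.cosh (r u)) * deriv φ u * deriv r u := by
    have h1 := (hgeo u).1
    rw [Real.tanh_eq_sinh_div_cosh] at h1
    linarith
  have hF1 : deriv (deriv φ) u
      = (2 * Real.sqrt 2 * deriv t u * deriv r u - 2 * deriv φ u * deriv r u)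
        / (Real.sinh (r u) * Real.cosh (r u)) := by
    have h3 := (hgeo u).2.2.1
    field_simp
    linarith
  have key : HasDerivAt (godelP t r φ ρ₁ ρ₂) 0 u := by
    have heq : godelP t r φ ρ₁ ρ₂ = fun x =>
      (ρ₂ + ρ₁ * Real.cosh (r x) ^ 2 / 2) * deriv t x +
        (ρ₁ * Real.cosh (r x) ^ 2 + 4 * ρ₂) * Real.sinh (r x) ^ 2 / (2 * Real.sqrt 2) * deriv φ x := rfl
    rw [heq]
    refine h.congr_deriv ?_
    symm
    simp only [Pi.pow_apply, Pi.mul_apply]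
    rw [hT1, hF1]
    field_simp
    linear_combination
      ((2 * Real.cosh (r u) ^ 2 * ρ₁ * Real.sinh (r u) ^ 3
          + 4 * ρ₂ * Real.sinh (r u) ^ 3) * deriv r u * deriv φ u) * hs2
      + ((-2 * Real.cosh (r u) ^ 2 * ρ₁ * Real.sinh (r u) - 8 * ρ₂ * Real.sinh (r u))
          * deriv r u * deriv φ u) * hpyth
  exact key

/-- Along a geodesic, `φ' = (√2/sinh(r)²)·(B − A/cosh(r)²)` where
`A = P_{2,0}(u₀)` and `B = P_{0,1}(u₀)`. -/
theorem godel_phidot_formula (t r φ z : ℝ → ℝ)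
    (ht : TwiceDiff t) (hr : TwiceDiff r) (hφ : TwiceDiff φ) (hz : TwiceDiff z)
    (hrpos : ∀ u, 0 < r u)
    (hgeo : GodelGeodesicEqns t r φ z)
    (u₀ : ℝ) (A B : ℝ)
    (hA : A = godelP t r φ 2 0 u₀) (hB : B = godelP t r φ 0 1 u₀) :
    ∀ u : ℝ, deriv φ u
      = Real.sqrt 2 / Real.sinh (r u) ^ 2 * (B - A / Real.cosh (r u) ^ 2) := by
  intro u
  have hconst : ∀ ρ₁ ρ₂ : ℝ, godelP t r φ ρ₁ ρ₂ u₀ = godelP t r φ ρ₁ ρ₂ u := by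
    intro ρ₁ ρ₂
    have hd := godelP_hasDerivAt t r φ z ht hr hφ hrpos hgeo ρ₁ ρ₂
    exact is_const_of_deriv_eq_zero (fun v => (hd v).differentiableAt)
      (fun v => (hd v).deriv) u₀ u
  have hAu : A = godelP t r φ 2 0 u := by rw [hA, hconst 2 0]
  have hBu : B = godelP t r φ 0 1 u := by rw [hB, hconst 0 1]
  have hSne : Real.sinh (r u) ≠ 0 := ne_of_gt (Real.sinh_pos_iff.2 (hrpos u))
  have hCne : Real.cosh (r u) ≠ 0 := ne_of_gt (Real.cosh_pos (r u))
  have hs2ne : Real.sqrt 2 ≠ 0 := by positivity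
  rw [hAu, hBu]
  simp only [godelP]
  field_simp
  ring
end

section
/- Let t, r, φ, z : ℝ → ℝ be a geodesic of Gödel's universe, and fix u₀ ∈ ℝ. Set A = P_{2,0}(u₀) and B = P_{0,1}(u₀). If A ≤ 0 and B ≥ 0, then t'(u) ≤ 0 for every u ∈ ℝ. -/
open Real

/-- Algebraic core of the conservation law for `P_{ρ₁,ρ₂}`. -/
lemma godel_aux (rh1 rh2 a s c t1 r1 p1 t2 p2 : ℝ)
    (ha : a ^ 2 = 2) (hc2 : c ^ 2 = s ^ 2 + 1) (ha0 : a ≠ 0) (hc0 : c ≠ 0) (hs0 : s ≠ 0)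
    (e1 : t2 + 4 * (s / c) * t1 * r1 + 2 * a * (s ^ 3 / c) * p1 * r1 = 0)
    (e3 : p2 * s * c - 2 * a * t1 * r1 + 2 * p1 * r1 = 0) :
    (rh1 * (2 * c * (s * r1)) / 2) * t1 + (rh2 + rh1 * c ^ 2 / 2) * t2
      + (((rh1 * (2 * c * (s * r1))) * s ^ 2 + (rh1 * c ^ 2 + 4 * rh2) * (2 * s * (c * r1)))
          / (2 * a)) * p1
      + ((rh1 * c ^ 2 + 4 * rh2) * s ^ 2 / (2 * a)) * p2 = 0 := by
  have hic : c * c⁻¹ = 1 := mul_inv_cancel₀ hc0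
  have his : s * s⁻¹ = 1 := mul_inv_cancel₀ hs0
  have hia : a * a⁻¹ = 1 := mul_inv_cancel₀ ha0
  have hia2 : a⁻¹ = a / 2 := by linear_combination (a / 2) * hia - (a⁻¹ / 2) * ha
  have hcic : c = (s ^ 2 + 1) * c⁻¹ := by linear_combination c⁻¹ * hc2 - c * hic
  have ht2 : t2 = (-(4 * s * t1 * r1) - 2 * a * s ^ 3 * p1 * r1) * c⁻¹ := by
    linear_combination e1
  have hp2 : p2 = (2 * a * t1 * r1 - 2 * p1 * r1) * c⁻¹ * s⁻¹ := by
    linear_combination c⁻¹ * s⁻¹ * e3 - p2 * s * s⁻¹ * hic - p2 * his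
  rw [ht2, hp2]
  linear_combination
    (-4 * c⁻¹ * s ^ 2 * s⁻¹ * r1 * p1 * rh2 + 4 * c * s * r1 * p1 * rh2
      + c * s ^ 3 * r1 * p1 * rh1 - c ^ 2 * c⁻¹ * s ^ 2 * s⁻¹ * r1 * p1 * rh1
      + c ^ 3 * s * r1 * p1 * rh1 + 4 * a * c⁻¹ * s ^ 2 * s⁻¹ * t1 * r1 * rh2
      + a * c ^ 2 * c⁻¹ * s ^ 2 * s⁻¹ * t1 * r1 * rh1) * hia2
    + (-2 * c * s * t1 * r1 * rh1 - (1/2) * a * c * s ^ 2 * s⁻¹ * r1 * p1 * rh1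
      - a * c * s ^ 3 * r1 * p1 * rh1 + (1/2) * a ^ 2 * c * s ^ 2 * s⁻¹ * t1 * r1 * rh1) * hic
    + (-2 * a * c⁻¹ * s * r1 * p1 * rh2 - (1/2) * a * c * s * r1 * p1 * rh1
      + 2 * a ^ 2 * c⁻¹ * s * t1 * r1 * rh2 + (1/2) * a ^ 2 * c * s * t1 * r1 * rh1) * his
    + (2 * c⁻¹ * s * t1 * r1 * rh2 + (1/2) * c * s * t1 * r1 * rh1) * ha
    + ((1/2) * a * c * s * r1 * p1 * rh1) * hc2
    + (2 * a * s * r1 * p1 * rh2) * hcic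

/-- If `A = P_{2,0}(u₀) ≤ 0` and `B = P_{0,1}(u₀) ≥ 0`, then `t' ≤ 0`
everywhere along the geodesic. -/
theorem godel_tdot_nonpos (t r φ z : ℝ → ℝ)
    (ht : TwiceDiff t) (hr : TwiceDiff r) (hφ : TwiceDiff φ) (hz : TwiceDiff z)
    (hrpos : ∀ u, 0 < r u)
    (hgeo : GodelGeodesicEqns t r φ z)
    (u₀ : ℝ) (A B : ℝ)
    (hA : A = godelP t r φ 2 0 u₀) (hB : B = godelP t r φ 0 1 u₀)
    (hA0 : A ≤ 0) (hB0 : 0 ≤ B) :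
    ∀ u : ℝ, deriv t u ≤ 0 := by
  obtain ⟨ht1, ht2d⟩ := ht
  obtain ⟨hr1, hr2d⟩ := hr
  obtain ⟨hφ1, hφ2d⟩ := hφ
  have ha : (Real.sqrt 2) ^ 2 = 2 := Real.sq_sqrt (by norm_num)
  have ha0 : Real.sqrt 2 ≠ 0 := by positivity
  have key : ∀ (ρ₁ ρ₂ u : ℝ), HasDerivAt (godelP t r φ ρ₁ ρ₂) 0 u := by
    intro ρ₁ ρ₂ u
    have hs0 : Real.sinh (r u) ≠ 0 := (Real.sinh_pos_iff.mpr (hrpos u)).ne'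
    have hc0 : Real.cosh (r u) ≠ 0 := (Real.cosh_pos (r u)).ne'
    have hcosh : HasDerivAt (fun v => Real.cosh (r v)) (Real.sinh (r u) * deriv r u) u :=
      (hr1 u).hasDerivAt.cosh
    have hsinh : HasDerivAt (fun v => Real.sinh (r v)) (Real.cosh (r u) * deriv r u) u :=
      (hr1 u).hasDerivAt.sinh
    have hdt : HasDerivAt (deriv t) (deriv (deriv t) u) u := (ht2d u).hasDerivAt
    have hdφ : HasDerivAt (deriv φ) (deriv (deriv φ) u) u := (hφ2d u).hasDerivAt
    have h1 : HasDerivAt (fun v => ρ₂ + ρ₁ * Real.cosh (r v) ^ 2 / 2)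
        (ρ₁ * ((2 : ℕ) * Real.cosh (r u) ^ 1 * (Real.sinh (r u) * deriv r u)) / 2) u :=
      (((hcosh.pow 2).const_mul ρ₁).div_const 2).const_add ρ₂
    have h2 : HasDerivAt
        (fun v => (ρ₁ * Real.cosh (r v) ^ 2 + 4 * ρ₂) * Real.sinh (r v) ^ 2 / (2 * Real.sqrt 2))
        ((ρ₁ * ((2 : ℕ) * Real.cosh (r u) ^ 1 * (Real.sinh (r u) * deriv r u))
            * Real.sinh (r u) ^ 2
          + (ρ₁ * Real.cosh (r u) ^ 2 + 4 * ρ₂)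
            * ((2 : ℕ) * Real.sinh (r u) ^ 1 * (Real.cosh (r u) * deriv r u)))
          / (2 * Real.sqrt 2)) u :=
      ((((hcosh.pow 2).const_mul ρ₁).add_const (4 * ρ₂)).mul (hsinh.pow 2)).div_const
        (2 * Real.sqrt 2)
    have hfull := (h1.mul hdt).add (h2.mul hdφ)
    have hE := godel_aux ρ₁ ρ₂ (Real.sqrt 2) (Real.sinh (r u)) (Real.cosh (r u))
      (deriv t u) (deriv r u) (deriv φ u) (deriv (deriv t) u) (deriv (deriv φ) u)
      ha (by linear_combination Real.cosh_sq_sub_sinh_sq (r u)) ha0 hc0 hs0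
      (by have := (hgeo u).1; rwa [Real.tanh_eq_sinh_div_cosh] at this)
      (by linear_combination (hgeo u).2.2.1)
    unfold godelP
    refine hfull.congr_deriv ?_
    push_cast
    linear_combination hE
  intro u
  have hdiff : ∀ (ρ₁ ρ₂ : ℝ), Differentiable ℝ (godelP t r φ ρ₁ ρ₂) :=
    fun ρ₁ ρ₂ v => (key ρ₁ ρ₂ v).differentiableAt
  have hconst : ∀ (ρ₁ ρ₂ : ℝ), godelP t r φ ρ₁ ρ₂ u = godelP t r φ ρ₁ ρ₂ u₀ :=
    fun ρ₁ ρ₂ => is_const_of_deriv_eq_zero (hdiff ρ₁ ρ₂)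
      (fun v => (key ρ₁ ρ₂ v).deriv) u u₀
  have hAu : godelP t r φ 2 0 u = A := by rw [hA]; exact hconst 2 0
  have hBu : godelP t r φ 0 1 u = B := by rw [hB]; exact hconst 0 1
  unfold godelP at hAu hBu
  set c := Real.cosh (r u) with hcdef
  set s := Real.sinh (r u) with hsdef
  have hc2 : c ^ 2 = s ^ 2 + 1 := by
    rw [hcdef, hsdef]; linear_combination Real.cosh_sq_sub_sinh_sq (r u)
  have hkey : c ^ 2 * deriv t u = 2 * A - c ^ 2 * B := by
    have hAu' : c ^ 2 * deriv t u * Real.sqrt 2 + c ^ 2 * s ^ 2 * deriv φ u = Real.sqrt 2 * A := by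
      field_simp at hAu
      linear_combination hAu / 2
    have hBu' : deriv t u * Real.sqrt 2 + 2 * s ^ 2 * deriv φ u = Real.sqrt 2 * B := by
      field_simp at hBu
      linear_combination hBu / 2
    have h3 : Real.sqrt 2 * (c ^ 2 * deriv t u - (2 * A - c ^ 2 * B)) = 0 := by
      linear_combination 2 * hAu' - c ^ 2 * hBu'
    have h4 := (mul_eq_zero.mp h3).resolve_left ha0
    linarith
  have hc2ge : (1 : ℝ) ≤ c ^ 2 := by nlinarith [sq_nonneg s]
  nlinarith [hkey, hA0, mul_nonneg (sq_nonneg c) hB0, hc2ge]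
end

section
/- Let t, r, φ, z : ℝ → ℝ be a geodesic of Gödel's universe, fix u₀ ∈ ℝ, and set A = P_{2,0}(u₀), B = P_{0,1}(u₀). Assume B > 0 and 2A/B ≥ 1, and let R_t = arcosh(√(2A/B)) (the critical radius where t' vanishes). Then for every u ∈ ℝ: t'(u) > 0 if and only if r(u) < R_t; t'(u) = 0 if and only if r(u) = R_t; and t'(u) < 0 if and only if r(u) > R_t. -/
open Real

/-- The inverse of `cosh` on `[1, ∞)`. -/
noncomputable def arcosh (x : ℝ) : ℝ :=
  Real.log (x + Real.sqrt (x ^ 2 - 1))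


private lemma godel_cosh_arcosh {x : ℝ} (hx : 1 ≤ x) : Real.cosh (_root_.arcosh x) = x := by
  have h1 : (0:ℝ) ≤ x ^ 2 - 1 := by nlinarith
  have hs : Real.sqrt (x ^ 2 - 1) ^ 2 = x ^ 2 - 1 := Real.sq_sqrt h1
  have hs0 : 0 ≤ Real.sqrt (x ^ 2 - 1) := Real.sqrt_nonneg _
  have hy : 0 < x + Real.sqrt (x ^ 2 - 1) := by nlinarith
  have hinv : (x + Real.sqrt (x^2-1))⁻¹ = x - Real.sqrt (x^2-1) :=
    inv_eq_of_mul_eq_one_right (by nlinarith)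
  rw [_root_.arcosh, Real.cosh_eq, Real.exp_log hy, Real.exp_neg, Real.exp_log hy, hinv]
  ring

private lemma godel_arcosh_nonneg {x : ℝ} (hx : 1 ≤ x) : 0 ≤ _root_.arcosh x :=
  Real.log_nonneg (by nlinarith [Real.sqrt_nonneg (x ^ 2 - 1)])

/-- With `A = P_{2,0}(u₀)`, `B = P_{0,1}(u₀)`, `B > 0`, `2A/B ≥ 1` and
critical radius `R_t = arcosh √(2A/B)`, the sign of `t'(u)` is determined by the
position of `r(u)` relative to `R_t`. -/
theorem godel_critical_radius (t r φ z : ℝ → ℝ)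
    (ht : TwiceDiff t) (hr : TwiceDiff r) (hφ : TwiceDiff φ) (hz : TwiceDiff z)
    (hrpos : ∀ u, 0 < r u)
    (hgeo : GodelGeodesicEqns t r φ z)
    (u₀ : ℝ) (A B : ℝ)
    (hA : A = godelP t r φ 2 0 u₀) (hB : B = godelP t r φ 0 1 u₀)
    (hBpos : 0 < B) (hAB : 1 ≤ 2 * A / B)
    (Rt : ℝ) (hRt : Rt = _root_.arcosh (Real.sqrt (2 * A / B))) :
    ∀ u : ℝ,
      (0 < deriv t u ↔ r u < Rt)
      ∧ (deriv t u = 0 ↔ r u = Rt)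
      ∧ (deriv t u < 0 ↔ Rt < r u) := by
    -- conserved quantities in cleaned-up form
  have hP01 : ∀ u, HasDerivAt
      (fun u => deriv t u + Real.sqrt 2 * (Real.sinh (r u)^2 * deriv φ u)) 0 u := by
    intro u
    have hs : Real.sinh (r u) ≠ 0 := ne_of_gt (Real.sinh_pos_iff.2 (hrpos u))
    have hc : Real.cosh (r u) ≠ 0 := (Real.cosh_pos (r u)).ne'
    obtain ⟨eq1, -, eq3, -⟩ := hgeo u
    rw [Real.tanh_eq_sinh_div_cosh] at eq1
    have Hr : HasDerivAt r (deriv r u) u := (hr.1 u).hasDerivAt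
    have Ht2 : HasDerivAt (deriv t) (deriv (deriv t) u) u := (ht.2 u).hasDerivAt
    have Hφ2 : HasDerivAt (deriv φ) (deriv (deriv φ) u) u := (hφ.2 u).hasDerivAt
    have Hs2 : HasDerivAt (fun u => Real.sinh (r u)^2)
        ((2:ℕ) * Real.sinh (r u)^1 * (Real.cosh (r u) * deriv r u)) u :=
      ((Real.hasDerivAt_sinh (r u)).comp u Hr).pow 2
    have H := Ht2.add ((Hs2.mul Hφ2).const_mul (Real.sqrt 2))
    refine H.congr_deriv ?_
    symm
    have eφ : deriv (deriv φ) u = (2 * Real.sqrt 2 * deriv t u * deriv r u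
        - 2 * deriv φ u * deriv r u) / (Real.sinh (r u) * Real.cosh (r u)) := by
      field_simp
      linarith [eq3]
    have et : deriv (deriv t) u = -(4 * (Real.sinh (r u) / Real.cosh (r u)) * deriv t u * deriv r u)
        - 2 * Real.sqrt 2 * (Real.sinh (r u) ^ 3 / Real.cosh (r u)) * deriv φ u * deriv r u := by
      linarith [eq1]
    rw [et, eφ]
    have hcs : Real.cosh (r u)^2 = Real.sinh (r u)^2 + 1 := Real.cosh_sq _
    have h2 : Real.sqrt 2 ^ 2 = 2 := Real.sq_sqrt (by norm_num)
    field_simp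
    ring_nf
    linear_combination (-2*Real.sqrt 2*deriv φ u*deriv r u*Real.sinh (r u))*hcs + (-2*deriv r u*deriv t u*Real.sinh (r u))*h2
  have hP20 : ∀ u, HasDerivAt (fun u => Real.cosh (r u)^2 * deriv t u
      + Real.sqrt 2 / 2 * (Real.cosh (r u)^2 * Real.sinh (r u)^2 * deriv φ u)) 0 u := by
    intro u
    have hs : Real.sinh (r u) ≠ 0 := ne_of_gt (Real.sinh_pos_iff.2 (hrpos u))
    have hc : Real.cosh (r u) ≠ 0 := (Real.cosh_pos (r u)).ne'
    obtain ⟨eq1, -, eq3, -⟩ := hgeo u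
    rw [Real.tanh_eq_sinh_div_cosh] at eq1
    have Hr : HasDerivAt r (deriv r u) u := (hr.1 u).hasDerivAt
    have Ht2 : HasDerivAt (deriv t) (deriv (deriv t) u) u := (ht.2 u).hasDerivAt
    have Hφ2 : HasDerivAt (deriv φ) (deriv (deriv φ) u) u := (hφ.2 u).hasDerivAt
    have Hs2 : HasDerivAt (fun u => Real.sinh (r u)^2)
        ((2:ℕ) * Real.sinh (r u)^1 * (Real.cosh (r u) * deriv r u)) u :=
      ((Real.hasDerivAt_sinh (r u)).comp u Hr).pow 2
    have Hc2 : HasDerivAt (fun u => Real.cosh (r u)^2)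
        ((2:ℕ) * Real.cosh (r u)^1 * (Real.sinh (r u) * deriv r u)) u :=
      ((Real.hasDerivAt_cosh (r u)).comp u Hr).pow 2
    have H := (Hc2.mul Ht2).add ((((Hc2.mul Hs2).mul Hφ2)).const_mul (Real.sqrt 2 / 2))
    refine H.congr_deriv ?_
    symm
    have eφ : deriv (deriv φ) u = (2 * Real.sqrt 2 * deriv t u * deriv r u
        - 2 * deriv φ u * deriv r u) / (Real.sinh (r u) * Real.cosh (r u)) := by
      field_simp
      linarith [eq3]
    have et : deriv (deriv t) u = -(4 * (Real.sinh (r u) / Real.cosh (r u)) * deriv t u * deriv r u)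
        - 2 * Real.sqrt 2 * (Real.sinh (r u) ^ 3 / Real.cosh (r u)) * deriv φ u * deriv r u := by
      linarith [eq1]
    rw [et, eφ]
    have hcs : Real.cosh (r u)^2 = Real.sinh (r u)^2 + 1 := Real.cosh_sq _
    have h2 : Real.sqrt 2 ^ 2 = 2 := Real.sq_sqrt (by norm_num)
    field_simp
    ring_nf
    simp only [Pi.mul_apply]
    linear_combination (-2*Real.sqrt 2*deriv φ u*deriv r u*Real.sinh (r u)^2*Real.cosh (r u)^2)*hcs + (-2*deriv r u*deriv t u*Real.sinh (r u)^2*Real.cosh (r u)^2)*h2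
  -- constancy
  have const01 : ∀ u, deriv t u + Real.sqrt 2 * (Real.sinh (r u)^2 * deriv φ u)
      = deriv t u₀ + Real.sqrt 2 * (Real.sinh (r u₀)^2 * deriv φ u₀) := fun u =>
    is_const_of_deriv_eq_zero (fun v => (hP01 v).differentiableAt)
      (fun v => (hP01 v).deriv) u u₀
  have const20 : ∀ u, Real.cosh (r u)^2 * deriv t u
        + Real.sqrt 2 / 2 * (Real.cosh (r u)^2 * Real.sinh (r u)^2 * deriv φ u)
      = Real.cosh (r u₀)^2 * deriv t u₀
        + Real.sqrt 2 / 2 * (Real.cosh (r u₀)^2 * Real.sinh (r u₀)^2 * deriv φ u₀) := fun u =>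
    is_const_of_deriv_eq_zero (fun v => (hP20 v).differentiableAt)
      (fun v => (hP20 v).deriv) u u₀
  -- identify with A and B
  have h2 : Real.sqrt 2 ^ 2 = 2 := Real.sq_sqrt (by norm_num)
  have hs2ne : Real.sqrt 2 ≠ 0 := by positivity
  have hBval : ∀ u, deriv t u + Real.sqrt 2 * (Real.sinh (r u)^2 * deriv φ u) = B := by
    intro u
    rw [const01 u, hB]
    simp only [godelP]
    field_simp
    linear_combination (2 * Real.sinh (r u₀)^2 * deriv φ u₀) * h2
  have hAval : ∀ u, Real.cosh (r u)^2 * deriv t u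
      + Real.sqrt 2 / 2 * (Real.cosh (r u)^2 * Real.sinh (r u)^2 * deriv φ u) = A := by
    intro u
    rw [const20 u, hA]
    simp only [godelP]
    field_simp
    ring_nf
    linear_combination (Real.cosh (r u₀)^2 * Real.sinh (r u₀)^2 * deriv φ u₀) * h2
  -- properties of Rt
  have hx1 : (1:ℝ) ≤ Real.sqrt (2 * A / B) := by
    rw [show (1:ℝ) = Real.sqrt 1 by simp]
    exact Real.sqrt_le_sqrt hAB
  have hRt0 : 0 ≤ Rt := hRt ▸ godel_arcosh_nonneg hx1
  have hcoshRt : Real.cosh Rt = Real.sqrt (2 * A / B) := hRt ▸ godel_cosh_arcosh hx1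
  have hc2R : B * Real.cosh Rt ^ 2 = 2 * A := by
    rw [hcoshRt, Real.sq_sqrt (by positivity : (0:ℝ) ≤ 2 * A / B)]
    field_simp
  intro u
  have hkey : Real.cosh (r u)^2 * (deriv t u + B) = 2 * A := by
    linear_combination 2 * hAval u - Real.cosh (r u)^2 * hBval u
  have hT : Real.cosh (r u)^2 * deriv t u = B * (Real.cosh Rt ^ 2 - Real.cosh (r u)^2) := by
    linear_combination hkey - hc2R
  have hcpos : 0 < Real.cosh (r u) := Real.cosh_pos _
  have hcRpos : 0 < Real.cosh Rt := Real.cosh_pos _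
  rcases lt_trichotomy (r u) Rt with h | h | h
  · have hlt : Real.cosh (r u) < Real.cosh Rt := by
      rw [Real.cosh_lt_cosh, abs_of_pos (hrpos u), abs_of_nonneg hRt0]; exact h
    have hsq : Real.cosh (r u) ^ 2 < Real.cosh Rt ^ 2 := by nlinarith
    have h1 : 0 < deriv t u := by nlinarith [mul_pos hcpos hcpos]
    exact ⟨⟨fun _ => h, fun _ => h1⟩,
      ⟨fun e => by linarith, fun e => by linarith⟩,
      ⟨fun e => by linarith, fun e => by linarith⟩⟩
  · have h1 : deriv t u = 0 := by
      have hc0 : Real.cosh (r u) ^ 2 * deriv t u = 0 := by rw [hT, h]; ring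
      exact (mul_eq_zero.1 hc0).resolve_left (pow_ne_zero 2 hcpos.ne')
    exact ⟨⟨fun e => by linarith, fun e => by linarith⟩,
      ⟨fun _ => h, fun _ => h1⟩,
      ⟨fun e => by linarith, fun e => by linarith⟩⟩
  · have hgt : Real.cosh Rt < Real.cosh (r u) := by
      rw [Real.cosh_lt_cosh, abs_of_nonneg hRt0, abs_of_pos (hrpos u)]; exact h
    have hsq : Real.cosh Rt ^ 2 < Real.cosh (r u) ^ 2 := by nlinarith
    have h1 : deriv t u < 0 := by nlinarith [mul_pos hcpos hcpos]
    exact ⟨⟨fun e => by linarith, fun e => by linarith⟩,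
      ⟨fun e => by linarith, fun e => by linarith⟩,
      ⟨fun _ => h, fun _ => h1⟩⟩
end

section
/- Let t, r, φ, z : ℝ → ℝ be a geodesic of Gödel's universe, fix u₀ ∈ ℝ, and set c₁ = C₁(u₀), c₂ = C₂(u₀). Then for every u ∈ ℝ, r'(u) = c₁·sin(φ(u)) + c₂·cos(φ(u)). -/
open Real

lemma godel_h1' (t r φ : ℝ → ℝ) (u : ℝ)
    (h1 : deriv (deriv t) u + 4 * Real.tanh (r u) * deriv t u * deriv r u
      + 2 * Real.sqrt 2 * (Real.sinh (r u) ^ 3 / Real.cosh (r u)) * deriv φ u * deriv r u = 0) :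
    Real.cosh (r u) * deriv (deriv t) u
      + 4 * Real.sinh (r u) * deriv t u * deriv r u
      + 2 * Real.sqrt 2 * Real.sinh (r u) ^ 3 * deriv φ u * deriv r u = 0 := by
  have hcne : Real.cosh (r u) ≠ 0 := (Real.cosh_pos _).ne'
  rw [Real.tanh_eq_sinh_div_cosh] at h1
  field_simp at h1
  linarith [h1]

lemma godelC1_hasDerivAt (t r φ z : ℝ → ℝ)
    (ht : TwiceDiff t) (hr : TwiceDiff r) (hφ : TwiceDiff φ)
    (hgeo : GodelGeodesicEqns t r φ z) (u : ℝ) :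
    HasDerivAt (godelC1 t r φ) 0 u := by
  obtain ⟨h1, h2, h3, -⟩ := hgeo u
  have h1' := godel_h1' t r φ u h1
  have htd : HasDerivAt t (deriv t u) u := (ht.1 u).hasDerivAt
  have hrd : HasDerivAt r (deriv r u) u := (hr.1 u).hasDerivAt
  have hφd : HasDerivAt φ (deriv φ u) u := (hφ.1 u).hasDerivAt
  have htd2 : HasDerivAt (deriv t) (deriv (deriv t) u) u := (ht.2 u).hasDerivAt
  have hrd2 : HasDerivAt (deriv r) (deriv (deriv r) u) u := (hr.2 u).hasDerivAt
  have hφd2 : HasDerivAt (deriv φ) (deriv (deriv φ) u) u := (hφ.2 u).hasDerivAt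
  have hcos : HasDerivAt (fun x => Real.cos (φ x)) (-Real.sin (φ u) * deriv φ u) u := hφd.cos
  have hsin : HasDerivAt (fun x => Real.sin (φ x)) (Real.cos (φ u) * deriv φ u) u := hφd.sin
  have h2r : HasDerivAt (fun x => 2 * r x) (2 * deriv r u) u := hrd.const_mul 2
  have hsh : HasDerivAt (fun x => Real.sinh (2 * r x)) (Real.cosh (2 * r u) * (2 * deriv r u)) u :=
    h2r.sinh
  have hch : HasDerivAt (fun x => Real.cosh (2 * r x)) (Real.sinh (2 * r u) * (2 * deriv r u)) u :=
    h2r.cosh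
  have H := (((hcos.const_mul (-(Real.sqrt 2))).mul hsh).mul htd2).add (hsin.mul hrd2) |>.sub
    ((((hcos.mul (hch.sub_const 2)).mul hsh).div_const 2).mul hφd2)
  have hgoal : HasDerivAt (godelC1 t r φ)
      ((((-(Real.sqrt 2) * (-Real.sin (φ u) * deriv φ u)) * Real.sinh (2 * r u)
          + -(Real.sqrt 2) * Real.cos (φ u) * (Real.cosh (2 * r u) * (2 * deriv r u)))
          * deriv t u
          + -(Real.sqrt 2) * Real.cos (φ u) * Real.sinh (2 * r u) * deriv (deriv t) u)
        + (Real.cos (φ u) * deriv φ u * deriv r u + Real.sin (φ u) * deriv (deriv r) u)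
        - ((((-Real.sin (φ u) * deriv φ u * (Real.cosh (2 * r u) - 2)
              + Real.cos (φ u) * (Real.sinh (2 * r u) * (2 * deriv r u))) * Real.sinh (2 * r u)
              + Real.cos (φ u) * (Real.cosh (2 * r u) - 2)
                * (Real.cosh (2 * r u) * (2 * deriv r u))) / 2) * deriv φ u
            + Real.cos (φ u) * (Real.cosh (2 * r u) - 2) * Real.sinh (2 * r u) / 2
              * deriv (deriv φ) u)) u := H
  have hc : Real.cosh (r u) ^ 2 = Real.sinh (r u) ^ 2 + 1 := Real.cosh_sq (r u)
  have hq : Real.sqrt 2 ^ 2 = 2 := Real.sq_sqrt (by norm_num)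
  convert hgoal using 1
  rw [Real.cosh_two_mul, Real.sinh_two_mul]
  linear_combination (2 * Real.sqrt 2 * Real.cos (φ u) * Real.sinh (r u)) * h1'
    + (-Real.sin (φ u)) * h2
    + (Real.cos (φ u) * (Real.cosh (r u) ^ 2 + Real.sinh (r u) ^ 2 - 2)) * h3
    + (-3 * deriv r u * deriv φ u * Real.cos (φ u)
       + 4 * Real.sqrt 2 * deriv t u * deriv r u * Real.cos (φ u)
       + Real.cosh (r u) ^ 2 * deriv r u * deriv φ u * Real.cos (φ u)
       + Real.sinh (r u) * Real.cosh (r u) * (deriv φ u) ^ 2 * Real.sin (φ u)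
       + 7 * Real.sinh (r u) ^ 2 * deriv r u * deriv φ u * Real.cos (φ u)) * hc
    + (-4 * Real.sinh (r u) ^ 4 * deriv r u * deriv φ u * Real.cos (φ u)) * hq

lemma godelC2_hasDerivAt (t r φ z : ℝ → ℝ)
    (ht : TwiceDiff t) (hr : TwiceDiff r) (hφ : TwiceDiff φ)
    (hgeo : GodelGeodesicEqns t r φ z) (u : ℝ) :
    HasDerivAt (godelC2 t r φ) 0 u := by
  obtain ⟨h1, h2, h3, -⟩ := hgeo u
  have h1' := godel_h1' t r φ u h1
  have htd : HasDerivAt t (deriv t u) u := (ht.1 u).hasDerivAt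
  have hrd : HasDerivAt r (deriv r u) u := (hr.1 u).hasDerivAt
  have hφd : HasDerivAt φ (deriv φ u) u := (hφ.1 u).hasDerivAt
  have htd2 : HasDerivAt (deriv t) (deriv (deriv t) u) u := (ht.2 u).hasDerivAt
  have hrd2 : HasDerivAt (deriv r) (deriv (deriv r) u) u := (hr.2 u).hasDerivAt
  have hφd2 : HasDerivAt (deriv φ) (deriv (deriv φ) u) u := (hφ.2 u).hasDerivAt
  have hcos : HasDerivAt (fun x => Real.cos (φ x)) (-Real.sin (φ u) * deriv φ u) u := hφd.cos
  have hsin : HasDerivAt (fun x => Real.sin (φ x)) (Real.cos (φ u) * deriv φ u) u := hφd.sin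
  have h2r : HasDerivAt (fun x => 2 * r x) (2 * deriv r u) u := hrd.const_mul 2
  have hsh : HasDerivAt (fun x => Real.sinh (2 * r x)) (Real.cosh (2 * r u) * (2 * deriv r u)) u :=
    h2r.sinh
  have hch : HasDerivAt (fun x => Real.cosh (2 * r x)) (Real.sinh (2 * r u) * (2 * deriv r u)) u :=
    h2r.cosh
  have H := (((hsin.const_mul (Real.sqrt 2)).mul hsh).mul htd2).add (hcos.mul hrd2) |>.add
    ((((hsin.mul (hch.sub_const 2)).mul hsh).div_const 2).mul hφd2)
  have hgoal : HasDerivAt (godelC2 t r φ)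
      (((Real.sqrt 2 * (Real.cos (φ u) * deriv φ u) * Real.sinh (2 * r u)
          + Real.sqrt 2 * Real.sin (φ u) * (Real.cosh (2 * r u) * (2 * deriv r u)))
          * deriv t u
          + Real.sqrt 2 * Real.sin (φ u) * Real.sinh (2 * r u) * deriv (deriv t) u)
        + (-Real.sin (φ u) * deriv φ u * deriv r u + Real.cos (φ u) * deriv (deriv r) u)
        + ((((Real.cos (φ u) * deriv φ u * (Real.cosh (2 * r u) - 2)
              + Real.sin (φ u) * (Real.sinh (2 * r u) * (2 * deriv r u))) * Real.sinh (2 * r u)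
              + Real.sin (φ u) * (Real.cosh (2 * r u) - 2)
                * (Real.cosh (2 * r u) * (2 * deriv r u))) / 2) * deriv φ u
            + Real.sin (φ u) * (Real.cosh (2 * r u) - 2) * Real.sinh (2 * r u) / 2
              * deriv (deriv φ) u)) u := H
  have hc : Real.cosh (r u) ^ 2 = Real.sinh (r u) ^ 2 + 1 := Real.cosh_sq (r u)
  have hq : Real.sqrt 2 ^ 2 = 2 := Real.sq_sqrt (by norm_num)
  convert hgoal using 1
  rw [Real.cosh_two_mul, Real.sinh_two_mul]
  linear_combination (-2 * Real.sqrt 2 * Real.sin (φ u) * Real.sinh (r u)) * h1'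
    + (-Real.cos (φ u)) * h2
    + (-(Real.sin (φ u) * (Real.cosh (r u) ^ 2 + Real.sinh (r u) ^ 2 - 2))) * h3
    + (3 * deriv r u * deriv φ u * Real.sin (φ u)
       - 4 * Real.sqrt 2 * deriv t u * deriv r u * Real.sin (φ u)
       - Real.cosh (r u) ^ 2 * deriv r u * deriv φ u * Real.sin (φ u)
       + Real.sinh (r u) * Real.cosh (r u) * (deriv φ u) ^ 2 * Real.cos (φ u)
       - 7 * Real.sinh (r u) ^ 2 * deriv r u * deriv φ u * Real.sin (φ u)) * hc
    + (4 * Real.sinh (r u) ^ 4 * deriv r u * deriv φ u * Real.sin (φ u)) * hq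

/-- Along a geodesic, `r' = c₁·sin φ + c₂·cos φ` with `c₁ = C₁(u₀)`,
`c₂ = C₂(u₀)`. -/
theorem godel_rdot_formula (t r φ z : ℝ → ℝ)
    (ht : TwiceDiff t) (hr : TwiceDiff r) (hφ : TwiceDiff φ) (hz : TwiceDiff z)
    (hrpos : ∀ u, 0 < r u)
    (hgeo : GodelGeodesicEqns t r φ z)
    (u₀ : ℝ) (c₁ c₂ : ℝ)
    (hc₁ : c₁ = godelC1 t r φ u₀) (hc₂ : c₂ = godelC2 t r φ u₀) :
    ∀ u : ℝ, deriv r u = c₁ * Real.sin (φ u) + c₂ * Real.cos (φ u) := by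
  intro u
  have hC1 : godelC1 t r φ u = godelC1 t r φ u₀ :=
    is_const_of_deriv_eq_zero
      (fun x => (godelC1_hasDerivAt t r φ z ht hr hφ hgeo x).differentiableAt)
      (fun x => (godelC1_hasDerivAt t r φ z ht hr hφ hgeo x).deriv) u u₀
  have hC2 : godelC2 t r φ u = godelC2 t r φ u₀ :=
    is_const_of_deriv_eq_zero
      (fun x => (godelC2_hasDerivAt t r φ z ht hr hφ hgeo x).differentiableAt)
      (fun x => (godelC2_hasDerivAt t r φ z ht hr hφ hgeo x).deriv) u u₀
  have key : deriv r u = godelC1 t r φ u * Real.sin (φ u) + godelC2 t r φ u * Real.cos (φ u) := by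
    unfold godelC1 godelC2
    linear_combination (-(deriv r u)) * (Real.sin_sq_add_cos_sq (φ u))
  rw [key, hC1, hC2, hc₁, hc₂]
end

section
/- Let t, r, φ, z : ℝ → ℝ be a geodesic of Gödel's universe, fix u₀ ∈ ℝ, and set c₁ = C₁(u₀), c₂ = C₂(u₀), A = P_{2,0}(u₀). Then for every u ∈ ℝ, φ'(u) = (2/sinh(2r(u)))·(c₁·cos(φ(u)) − c₂·sin(φ(u))) + A·2√2/cosh(r(u))². -/
open Real

/-- Along a geodesic, `φ' = (2/sinh 2r)·(c₁·cos φ − c₂·sin φ) + A·2√2/cosh(r)²`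
with `c₁ = C₁(u₀)`, `c₂ = C₂(u₀)`, `A = P_{2,0}(u₀)`. -/
theorem godel_phidot_formula_c (t r φ z : ℝ → ℝ)
    (ht : TwiceDiff t) (hr : TwiceDiff r) (hφ : TwiceDiff φ) (hz : TwiceDiff z)
    (hrpos : ∀ u, 0 < r u)
    (hgeo : GodelGeodesicEqns t r φ z)
    (u₀ : ℝ) (c₁ c₂ A : ℝ)
    (hc₁ : c₁ = godelC1 t r φ u₀) (hc₂ : c₂ = godelC2 t r φ u₀)
    (hA : A = godelP t r φ 2 0 u₀) :
    ∀ u : ℝ, deriv φ u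
      = 2 / Real.sinh (2 * r u) * (c₁ * Real.cos (φ u) - c₂ * Real.sin (φ u))
        + A * (2 * Real.sqrt 2) / Real.cosh (r u) ^ 2 := by
  have hw2 : Real.sqrt 2 ^ 2 = 2 := Real.sq_sqrt (by norm_num)

  have keyC1 : ∀ u : ℝ, HasDerivAt (godelC1 t r φ)
      ((Real.sin (φ u) * deriv (deriv r) u) + (Real.cos (φ u) * deriv r u * deriv φ u) + ((3 : ℝ) * Real.cosh (r u) ^ 2 * Real.cos (φ u) * deriv r u * deriv φ u) + ((-2 : ℝ) * Real.cosh (r u) ^ 2 * Real.sqrt 2 * Real.cos (φ u) * deriv t u * deriv r u) + ((-2 : ℝ) * Real.cosh (r u) ^ 4 * Real.cos (φ u) * deriv r u * deriv φ u) + ((-3 : ℝ) * Real.sinh (r u) * Real.cosh (r u) * Real.sin (φ u) * deriv φ u ^ 2) + ((3 : ℝ) * Real.sinh (r u) * Real.cosh (r u) * Real.cos (φ u) * deriv (deriv φ) u) + ((2 : ℝ) * Real.sinh (r u) * Real.cosh (r u) * Real.sqrt 2 * Real.sin (φ u) * deriv t u * deriv φ u) + ((-2 : ℝ) * Real.sinh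 (r u) * Real.cosh (r u) * Real.sqrt 2 * Real.cos (φ u) * deriv (deriv t) u) + ((2 : ℝ) * Real.sinh (r u) * Real.cosh (r u) ^ 3 * Real.sin (φ u) * deriv φ u ^ 2) + ((-2 : ℝ) * Real.sinh (r u) * Real.cosh (r u) ^ 3 * Real.cos (φ u) * deriv (deriv φ) u) + ((3 : ℝ) * Real.sinh (r u) ^ 2 * Real.cos (φ u) * deriv r u * deriv φ u) + ((-2 : ℝ) * Real.sinh (r u) ^ 2 * Real.sqrt 2 * Real.cos (φ u) * deriv t u * deriv r u) + ((-6 : ℝ) * Real.sinh (r u) ^ 2 * Real.cosh (r u) ^ 2 * Real.cos (φ u) * deriv r u * deriv φ u)) u := by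
    intro u
    have hφ1 : HasDerivAt φ (deriv φ u) u := (hφ.1 u).hasDerivAt
    have hr1 : HasDerivAt r (deriv r u) u := (hr.1 u).hasDerivAt
    have ht2 : HasDerivAt (deriv t) (deriv (deriv t) u) u := (ht.2 u).hasDerivAt
    have hr2 : HasDerivAt (deriv r) (deriv (deriv r) u) u := (hr.2 u).hasDerivAt
    have hφ2 : HasDerivAt (deriv φ) (deriv (deriv φ) u) u := (hφ.2 u).hasDerivAt
    have hsinh2 : HasDerivAt (fun v => Real.sinh (2 * r v))
        (Real.cosh (2 * r u) * (2 * deriv r u)) u := (hr1.const_mul 2).sinh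
    have hcosh2 : HasDerivAt (fun v => Real.cosh (2 * r v))
        (Real.sinh (2 * r u) * (2 * deriv r u)) u := (hr1.const_mul 2).cosh
    have h1 := ((hφ1.cos.const_mul (-(Real.sqrt 2))).mul hsinh2).mul ht2
    have h2 := hφ1.sin.mul hr2
    have h3 := (((hφ1.cos.mul (hcosh2.sub_const 2)).mul hsinh2).div_const 2).mul hφ2
    have hall := (h1.add h2).sub h3
    unfold godelC1
    refine hall.congr_deriv ?_
    symm
    simp only [Pi.mul_apply, Pi.pow_apply]
    rw [Real.sinh_two_mul, Real.cosh_two_mul]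
    linear_combination (((-1 : ℝ) * Real.cosh (r u) ^ 2 * Real.cos (φ u) * deriv r u * deriv φ u) + (Real.sinh (r u) * Real.cosh (r u) * Real.sin (φ u) * deriv φ u ^ 2) + ((-1 : ℝ) * Real.sinh (r u) * Real.cosh (r u) * Real.cos (φ u) * deriv (deriv φ) u) + ((-1 : ℝ) * Real.sinh (r u) ^ 2 * Real.cos (φ u) * deriv r u * deriv φ u)) * Real.cosh_sq (r u)
  have hzeroC1 : ∀ u : ℝ, deriv (godelC1 t r φ) u = 0 := by
    intro u
    rw [(keyC1 u).deriv]
    have hcpos := Real.cosh_pos (r u)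
    have he2 := (hgeo u).2.1
    have he3 := (hgeo u).2.2.1
    have hcsq := Real.cosh_sq (r u)
    have he1 : Real.cosh (r u) * deriv (deriv t) u
        + 4 * Real.sinh (r u) * deriv t u * deriv r u
        + 2 * Real.sqrt 2 * Real.sinh (r u) ^ 3 * deriv φ u * deriv r u = 0 := by
      have e1 := (hgeo u).1
      rw [Real.tanh_eq_sinh_div_cosh] at e1
      field_simp at e1
      linear_combination e1
    have hmul : Real.cosh (r u) * ((Real.sin (φ u) * deriv (deriv r) u) + (Real.cos (φ u) * deriv r u * deriv φ u) + ((3 : ℝ) * Real.cosh (r u) ^ 2 * Real.cos (φ u) * deriv r u * deriv φ u) + ((-2 : ℝ) * Real.cosh (r u) ^ 2 * Real.sqrt 2 * Real.cos (φ u) * deriv t u * deriv r u) + ((-2 : ℝ) * Real.cosh (r u) ^ 4 * Real.cos (φ u) * deriv r u * deriv φ u) + ((-3 : ℝ) * Real.sinh (r u) * Real.cosh (r u) * Real.sin (φ u) * deriv φ u ^ 2) + ((3 : ℝ) * Real.sinh (r u) * Real.cosh (r u) * Real.cos (φ u) * deriv (deriv φ) u) + ((2 : ℝ) * Real.sinh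 (r u) * Real.cosh (r u) * Real.sqrt 2 * Real.sin (φ u) * deriv t u * deriv φ u) + ((-2 : ℝ) * Real.sinh (r u) * Real.cosh (r u) * Real.sqrt 2 * Real.cos (φ u) * deriv (deriv t) u) + ((2 : ℝ) * Real.sinh (r u) * Real.cosh (r u) ^ 3 * Real.sin (φ u) * deriv φ u ^ 2) + ((-2 : ℝ) * Real.sinh (r u) * Real.cosh (r u) ^ 3 * Real.cos (φ u) * deriv (deriv φ) u) + ((3 : ℝ) * Real.sinh (r u) ^ 2 * Real.cos (φ u) * deriv r u * deriv φ u) + ((-2 : ℝ) * Real.sinh (r u) ^ 2 * Real.sqrt 2 * Real.cos (φ u) * deriv t u * deriv r u) + ((-6 : ℝ) * Real.sinh (r u) ^ 2 * Real.cosh (r u) ^ 2 * Real.cos (φ u) * deriv r u * deriv φ u)) = 0 := by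
      linear_combination (((-2 : ℝ) * Real.sinh (r u) * Real.cosh (r u) * Real.sqrt 2 * Real.cos (φ u))) * he1 + ((Real.cosh (r u) * Real.sin (φ u))) * he2 + (((3 : ℝ) * Real.cosh (r u) * Real.cos (φ u)) + ((-2 : ℝ) * Real.cosh (r u) ^ 3 * Real.cos (φ u))) * he3 + (((5 : ℝ) * Real.cosh (r u) * Real.cos (φ u) * deriv r u * deriv φ u) + ((-6 : ℝ) * Real.cosh (r u) * Real.sqrt 2 * Real.cos (φ u) * deriv t u * deriv r u) + ((-2 : ℝ) * Real.cosh (r u) ^ 3 * Real.cos (φ u) * deriv r u * deriv φ u) + ((-8 : ℝ) * Real.sinh (r u) ^ 2 * Real.cosh (r u) * Real.cos (φ u) * deriv r u * deriv φ u)) * hcsq + (((4 : ℝ) * Real.sinh (r u) ^ 4 * Real.cosh (r u) * Real.cos (φ u) * deriv r u * deriv φ u)) * hw2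
    rcases mul_eq_zero.mp hmul with h | h
    · exact absurd h (ne_of_gt hcpos)
    · exact h

  have keyC2 : ∀ u : ℝ, HasDerivAt (godelC2 t r φ)
      (((-1 : ℝ) * Real.sin (φ u) * deriv r u * deriv φ u) + (Real.cos (φ u) * deriv (deriv r) u) + ((-3 : ℝ) * Real.cosh (r u) ^ 2 * Real.sin (φ u) * deriv r u * deriv φ u) + ((2 : ℝ) * Real.cosh (r u) ^ 2 * Real.sqrt 2 * Real.sin (φ u) * deriv t u * deriv r u) + ((2 : ℝ) * Real.cosh (r u) ^ 4 * Real.sin (φ u) * deriv r u * deriv φ u) + ((-3 : ℝ) * Real.sinh (r u) * Real.cosh (r u) * Real.sin (φ u) * deriv (deriv φ) u) + ((-3 : ℝ) * Real.sinh (r u) * Real.cosh (r u) * Real.cos (φ u) * deriv φ u ^ 2) + ((2 : ℝ) * Real.sinh (r u) * Real.cosh (r u) * Real.sqrt 2 * Real.sin (φ u) * deriv (deriv t) u) + ((2 : ℝ) * Real.sinh (r u) * Real.cosh (r u) * Real.sqrt 2 * Real.cos (φ u) * deriv t u * deriv φ u) + ((2 : ℝ) * Real.sinh (r u) * Real.cosh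 (r u) ^ 3 * Real.sin (φ u) * deriv (deriv φ) u) + ((2 : ℝ) * Real.sinh (r u) * Real.cosh (r u) ^ 3 * Real.cos (φ u) * deriv φ u ^ 2) + ((-3 : ℝ) * Real.sinh (r u) ^ 2 * Real.sin (φ u) * deriv r u * deriv φ u) + ((2 : ℝ) * Real.sinh (r u) ^ 2 * Real.sqrt 2 * Real.sin (φ u) * deriv t u * deriv r u) + ((6 : ℝ) * Real.sinh (r u) ^ 2 * Real.cosh (r u) ^ 2 * Real.sin (φ u) * deriv r u * deriv φ u)) u := by
    intro u
    have hφ1 : HasDerivAt φ (deriv φ u) u := (hφ.1 u).hasDerivAt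
    have hr1 : HasDerivAt r (deriv r u) u := (hr.1 u).hasDerivAt
    have ht2 : HasDerivAt (deriv t) (deriv (deriv t) u) u := (ht.2 u).hasDerivAt
    have hr2 : HasDerivAt (deriv r) (deriv (deriv r) u) u := (hr.2 u).hasDerivAt
    have hφ2 : HasDerivAt (deriv φ) (deriv (deriv φ) u) u := (hφ.2 u).hasDerivAt
    have hsinh2 : HasDerivAt (fun v => Real.sinh (2 * r v))
        (Real.cosh (2 * r u) * (2 * deriv r u)) u := (hr1.const_mul 2).sinh
    have hcosh2 : HasDerivAt (fun v => Real.cosh (2 * r v))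
        (Real.sinh (2 * r u) * (2 * deriv r u)) u := (hr1.const_mul 2).cosh
    have h1 := ((hφ1.sin.const_mul (Real.sqrt 2)).mul hsinh2).mul ht2
    have h2 := hφ1.cos.mul hr2
    have h3 := (((hφ1.sin.mul (hcosh2.sub_const 2)).mul hsinh2).div_const 2).mul hφ2
    have hall := (h1.add h2).add h3
    unfold godelC2
    refine hall.congr_deriv ?_
    symm
    simp only [Pi.mul_apply, Pi.pow_apply]
    rw [Real.sinh_two_mul, Real.cosh_two_mul]
    linear_combination ((Real.cosh (r u) ^ 2 * Real.sin (φ u) * deriv r u * deriv φ u) + (Real.sinh (r u) * Real.cosh (r u) * Real.sin (φ u) * deriv (deriv φ) u) + (Real.sinh (r u) * Real.cosh (r u) * Real.cos (φ u) * deriv φ u ^ 2) + (Real.sinh (r u) ^ 2 * Real.sin (φ u) * deriv r u * deriv φ u)) * Real.cosh_sq (r u)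
  have hzeroC2 : ∀ u : ℝ, deriv (godelC2 t r φ) u = 0 := by
    intro u
    rw [(keyC2 u).deriv]
    have hcpos := Real.cosh_pos (r u)
    have he2 := (hgeo u).2.1
    have he3 := (hgeo u).2.2.1
    have hcsq := Real.cosh_sq (r u)
    have he1 : Real.cosh (r u) * deriv (deriv t) u
        + 4 * Real.sinh (r u) * deriv t u * deriv r u
        + 2 * Real.sqrt 2 * Real.sinh (r u) ^ 3 * deriv φ u * deriv r u = 0 := by
      have e1 := (hgeo u).1
      rw [Real.tanh_eq_sinh_div_cosh] at e1
      field_simp at e1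
      linear_combination e1
    have hmul : Real.cosh (r u) * (((-1 : ℝ) * Real.sin (φ u) * deriv r u * deriv φ u) + (Real.cos (φ u) * deriv (deriv r) u) + ((-3 : ℝ) * Real.cosh (r u) ^ 2 * Real.sin (φ u) * deriv r u * deriv φ u) + ((2 : ℝ) * Real.cosh (r u) ^ 2 * Real.sqrt 2 * Real.sin (φ u) * deriv t u * deriv r u) + ((2 : ℝ) * Real.cosh (r u) ^ 4 * Real.sin (φ u) * deriv r u * deriv φ u) + ((-3 : ℝ) * Real.sinh (r u) * Real.cosh (r u) * Real.sin (φ u) * deriv (deriv φ) u) + ((-3 : ℝ) * Real.sinh (r u) * Real.cosh (r u) * Real.cos (φ u) * deriv φ u ^ 2) + ((2 : ℝ) * Real.sinh (r u) * Real.cosh (r u) * Real.sqrt 2 * Real.sin (φ u) * deriv (deriv t) u) + ((2 : ℝ) * Real.sinh (r u) * Real.cosh (r u) * Real.sqrt 2 * Real.cos (φ u) * deriv t u * deriv φ u) + ((2 : ℝ) * Real.sinh (r u) * Real.cosh (r u) ^ 3 * Real.sin (φ u) * deriv (deriv φ) u) + ((2 : ℝ) * Real.sinh (r u) * Real.cosh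 (r u) ^ 3 * Real.cos (φ u) * deriv φ u ^ 2) + ((-3 : ℝ) * Real.sinh (r u) ^ 2 * Real.sin (φ u) * deriv r u * deriv φ u) + ((2 : ℝ) * Real.sinh (r u) ^ 2 * Real.sqrt 2 * Real.sin (φ u) * deriv t u * deriv r u) + ((6 : ℝ) * Real.sinh (r u) ^ 2 * Real.cosh (r u) ^ 2 * Real.sin (φ u) * deriv r u * deriv φ u)) = 0 := by
      linear_combination (((2 : ℝ) * Real.sinh (r u) * Real.cosh (r u) * Real.sqrt 2 * Real.sin (φ u))) * he1 + ((Real.cosh (r u) * Real.cos (φ u))) * he2 + (((-3 : ℝ) * Real.cosh (r u) * Real.sin (φ u)) + ((2 : ℝ) * Real.cosh (r u) ^ 3 * Real.sin (φ u))) * he3 + (((-5 : ℝ) * Real.cosh (r u) * Real.sin (φ u) * deriv r u * deriv φ u) + ((6 : ℝ) * Real.cosh (r u) * Real.sqrt 2 * Real.sin (φ u) * deriv t u * deriv r u) + ((2 : ℝ) * Real.cosh (r u) ^ 3 * Real.sin (φ u) * deriv r u * deriv φ u) + ((8 : ℝ) * Real.sinh (r u) ^ 2 * Real.cosh (r u)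 * Real.sin (φ u) * deriv r u * deriv φ u)) * hcsq + (((-4 : ℝ) * Real.sinh (r u) ^ 4 * Real.cosh (r u) * Real.sin (φ u) * deriv r u * deriv φ u)) * hw2
    rcases mul_eq_zero.mp hmul with h | h
    · exact absurd h (ne_of_gt hcpos)
    · exact h

  have keyP : ∀ u : ℝ, HasDerivAt (godelP t r φ 2 0)
      ((Real.cosh (r u) ^ 2 * deriv (deriv t) u) + ((2 : ℝ) * Real.sinh (r u) * Real.cosh (r u) * deriv t u * deriv r u) + (Real.sinh (r u) * Real.cosh (r u) ^ 3 * Real.sqrt 2 * deriv r u * deriv φ u) + ((1/2 : ℝ) * Real.sinh (r u) ^ 2 * Real.cosh (r u) ^ 2 * Real.sqrt 2 * deriv (deriv φ) u) + (Real.sinh (r u) ^ 3 * Real.cosh (r u) * Real.sqrt 2 * deriv r u * deriv φ u)) u := by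
    intro u
    have hφ1 : HasDerivAt φ (deriv φ u) u := (hφ.1 u).hasDerivAt
    have hr1 : HasDerivAt r (deriv r u) u := (hr.1 u).hasDerivAt
    have ht2 : HasDerivAt (deriv t) (deriv (deriv t) u) u := (ht.2 u).hasDerivAt
    have hr2 : HasDerivAt (deriv r) (deriv (deriv r) u) u := (hr.2 u).hasDerivAt
    have hφ2 : HasDerivAt (deriv φ) (deriv (deriv φ) u) u := (hφ.2 u).hasDerivAt
    have hsinh2 : HasDerivAt (fun v => Real.sinh (2 * r v))
        (Real.cosh (2 * r u) * (2 * deriv r u)) u := (hr1.const_mul 2).sinh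
    have hcosh2 : HasDerivAt (fun v => Real.cosh (2 * r v))
        (Real.sinh (2 * r u) * (2 * deriv r u)) u := (hr1.const_mul 2).cosh
    have hcoshr : HasDerivAt (fun v => Real.cosh (r v)) (Real.sinh (r u) * deriv r u) u := hr1.cosh
    have hsinhr : HasDerivAt (fun v => Real.sinh (r v)) (Real.cosh (r u) * deriv r u) u := hr1.sinh
    have hc2 := (((hcoshr.pow 2).const_mul 2).div_const 2).const_add (0:ℝ)
    have h1 := hc2.mul ht2
    have hs2 := ((((hcoshr.pow 2).const_mul 2).add_const ((4:ℝ) * 0)).mul (hsinhr.pow 2)).div_const (2 * Real.sqrt 2)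
    have h2 := hs2.mul hφ2
    have hall := h1.add h2
    unfold godelP
    refine hall.congr_deriv ?_
    symm
    simp only [Pi.mul_apply, Pi.pow_apply]
    have hwne : Real.sqrt 2 ≠ 0 := by positivity
    field_simp
    linear_combination (((-8 : ℝ) * Real.sinh (r u) * Real.cosh (r u) * deriv r u * deriv φ u) + ((4 : ℝ) * Real.sinh (r u) * Real.cosh (r u) * Real.sqrt 2 ^ 2 * deriv r u * deriv φ u) + ((-4 : ℝ) * Real.sinh (r u) ^ 2 * deriv (deriv φ) u) + ((2 : ℝ) * Real.sinh (r u) ^ 2 * Real.sqrt 2 ^ 2 * deriv (deriv φ) u)) * Real.cosh_sq (r u) + (((4 : ℝ) * Real.sinh (r u) * Real.cosh (r u) * deriv r u * deriv φ u) + ((2 : ℝ) * Real.sinh (r u) ^ 2 * deriv (deriv φ) u) + ((8 : ℝ) * Real.sinh (r u) ^ 3 * Real.cosh (r u) * deriv r u * deriv φ u) + ((2 : ℝ) * Real.sinh (r u) ^ 4 * deriv (deriv φ) u)) * hw2 + ((-2 : ℝ) * Real.cosh (r u) * Real.sinh (r u) ^ 3 * deriv r u * deriv φ u - Real.cosh (r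 u) ^ 2 * Real.sinh (r u) ^ 2 * deriv (deriv φ) u - 2 * Real.cosh (r u) ^ 3 * Real.sinh (r u) * deriv r u * deriv φ u) * hw2
  have hzeroP : ∀ u : ℝ, deriv (godelP t r φ 2 0) u = 0 := by
    intro u
    rw [(keyP u).deriv]
    have hcpos := Real.cosh_pos (r u)
    have he2 := (hgeo u).2.1
    have he3 := (hgeo u).2.2.1
    have hcsq := Real.cosh_sq (r u)
    have he1 : Real.cosh (r u) * deriv (deriv t) u
        + 4 * Real.sinh (r u) * deriv t u * deriv r u
        + 2 * Real.sqrt 2 * Real.sinh (r u) ^ 3 * deriv φ u * deriv r u = 0 := by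
      have e1 := (hgeo u).1
      rw [Real.tanh_eq_sinh_div_cosh] at e1
      field_simp at e1
      linear_combination e1
    have hmul : Real.cosh (r u) * ((Real.cosh (r u) ^ 2 * deriv (deriv t) u) + ((2 : ℝ) * Real.sinh (r u) * Real.cosh (r u) * deriv t u * deriv r u) + (Real.sinh (r u) * Real.cosh (r u) ^ 3 * Real.sqrt 2 * deriv r u * deriv φ u) + ((1/2 : ℝ) * Real.sinh (r u) ^ 2 * Real.cosh (r u) ^ 2 * Real.sqrt 2 * deriv (deriv φ) u) + (Real.sinh (r u) ^ 3 * Real.cosh (r u) * Real.sqrt 2 * deriv r u * deriv φ u)) = 0 := by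
      linear_combination ((Real.cosh (r u) ^ 2)) * he1 + (0) * he2 + (((1/2 : ℝ) * Real.sinh (r u) * Real.cosh (r u) ^ 2 * Real.sqrt 2)) * he3 + (((-2 : ℝ) * Real.sinh (r u) * deriv t u * deriv r u) + (Real.sinh (r u) * Real.sqrt 2 ^ 2 * deriv t u * deriv r u) + (Real.sinh (r u) * Real.cosh (r u) ^ 2 * Real.sqrt 2 * deriv r u * deriv φ u)) * hcsq + ((Real.sinh (r u) * deriv t u * deriv r u) + (Real.sinh (r u) ^ 3 * deriv t u * deriv r u)) * hw2
    rcases mul_eq_zero.mp hmul with h | h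
    · exact absurd h (ne_of_gt hcpos)
    · exact h

  have hconstC1 : ∀ u : ℝ, godelC1 t r φ u = c₁ := fun u => by
    rw [hc₁]
    exact is_const_of_deriv_eq_zero (fun v => (keyC1 v).differentiableAt) hzeroC1 u u₀
  have hconstC2 : ∀ u : ℝ, godelC2 t r φ u = c₂ := fun u => by
    rw [hc₂]
    exact is_const_of_deriv_eq_zero (fun v => (keyC2 v).differentiableAt) hzeroC2 u u₀
  have hconstP : ∀ u : ℝ, godelP t r φ 2 0 u = A := fun u => by
    rw [hA]
    exact is_const_of_deriv_eq_zero (fun v => (keyP v).differentiableAt) hzeroP u u₀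
  intro u
  rw [← hconstC1 u, ← hconstC2 u, ← hconstP u]
  simp only [godelC1, godelC2, godelP]
  rw [Real.sinh_two_mul, Real.cosh_two_mul]
  have hs : Real.sinh (r u) ≠ 0 := ne_of_gt (Real.sinh_pos_iff.2 (hrpos u))
  have hc : Real.cosh (r u) ≠ 0 := ne_of_gt (Real.cosh_pos (r u))
  have hw : Real.sqrt 2 ≠ 0 := by positivity
  have hcsq := Real.cosh_sq (r u)
  have hpyth := Real.sin_sq_add_cos_sq (φ u)
  field_simp
  linear_combination (2 * Real.sinh (r u) * Real.cosh (r u) ^ 2 * Real.sqrt 2 * deriv t u + deriv φ u * Real.sinh (r u) * Real.cosh (r u) ^ 2 * (Real.cosh (r u) ^ 2 + Real.sinh (r u) ^ 2 - 2)) * hpyth + (deriv φ u * Real.sinh (r u) * Real.cosh (r u) ^ 2) * hcsq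
end

section
/- Let t, r, φ, z : ℝ → ℝ be a geodesic of Gödel's universe, fix u₀ ∈ ℝ, and set c₁ = C₁(u₀), c₂ = C₂(u₀). Then the radial velocity is bounded: |r'(u)| ≤ √(c₁² + c₂²) for every u ∈ ℝ. -/
open Real

section AuxGodel

variable (t r φ : ℝ → ℝ)

theorem godelC1_hasDerivAt_zero
    (ht : TwiceDiff t) (hr : TwiceDiff r) (hφ : TwiceDiff φ)
    (e1 : ∀ u, deriv (deriv t) u * Real.cosh (r u)
        + 4 * Real.sinh (r u) * deriv t u * deriv r u
        + 2 * Real.sqrt 2 * Real.sinh (r u) ^ 3 * deriv φ u * deriv r u = 0)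
    (e2 : ∀ u, deriv (deriv r) u
        + 2 * Real.sqrt 2 * Real.sinh (r u) * Real.cosh (r u) * deriv t u * deriv φ u
        + Real.sinh (r u) * Real.cosh (r u) * (2 * Real.cosh (r u) ^ 2 - 3) * (deriv φ u) ^ 2 = 0)
    (e3 : ∀ u, deriv (deriv φ) u * Real.sinh (r u) * Real.cosh (r u)
        - 2 * Real.sqrt 2 * deriv t u * deriv r u + 2 * deriv φ u * deriv r u = 0) :
    ∀ u, HasDerivAt (godelC1 t r φ) 0 u := by
  intro u
  have hφ1 : HasDerivAt φ (deriv φ u) u := (hφ.1 u).hasDerivAt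
  have hφ2 : HasDerivAt (deriv φ) (deriv (deriv φ) u) u := (hφ.2 u).hasDerivAt
  have hr1 : HasDerivAt r (deriv r u) u := (hr.1 u).hasDerivAt
  have hr2 : HasDerivAt (deriv r) (deriv (deriv r) u) u := (hr.2 u).hasDerivAt
  have ht2 : HasDerivAt (deriv t) (deriv (deriv t) u) u := (ht.2 u).hasDerivAt
  have hcos := hφ1.cos
  have hsin := hφ1.sin
  have h2r : HasDerivAt (fun x => 2 * r x) (2 * deriv r u) u := hr1.const_mul 2
  have hsinh := h2r.sinh
  have hcosh := h2r.cosh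
  have hcm : HasDerivAt (fun x => Real.cosh (2 * r x) - 2)
      (Real.sinh (2 * r u) * (2 * deriv r u)) u := hcosh.sub_const 2
  have H := ((((hcos.const_mul (-(Real.sqrt 2))).mul hsinh).mul ht2).add
      (hsin.mul hr2)).sub ((((hcos.mul hcm).mul hsinh).div_const 2).mul hφ2)
  refine H.congr_deriv (Eq.symm ?_)
  simp only [Pi.mul_apply]
  rw [Real.sinh_two_mul, Real.cosh_two_mul]
  have hw : Real.sqrt 2 ^ 2 = 2 := Real.sq_sqrt (by norm_num)
  have hcs : Real.cosh (r u) ^ 2 - Real.sinh (r u) ^ 2 = 1 := Real.cosh_sq_sub_sinh_sq (r u)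
  linear_combination
    (2 * Real.sqrt 2 * Real.sinh (r u) * Real.cos (φ u)) * e1 u
    + (-Real.sin (φ u)) * e2 u
    + (-(Real.cos (φ u) * (2 - Real.cosh (r u) ^ 2 - Real.sinh (r u) ^ 2))) * e3 u
    + (-(4 * Real.sinh (r u) ^ 4 * Real.cos (φ u) * deriv r u * deriv φ u)) * hw
    + (-(3 * Real.cos (φ u) * deriv r u * deriv φ u
        - Real.cosh (r u) ^ 2 * Real.cos (φ u) * deriv r u * deriv φ u
        - Real.sinh (r u) * Real.cosh (r u) * Real.sin (φ u) * (deriv φ u) ^ 2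
        - 7 * Real.sinh (r u) ^ 2 * Real.cos (φ u) * deriv r u * deriv φ u
        - 4 * Real.sqrt 2 * Real.cos (φ u) * deriv t u * deriv r u)) * hcs

theorem godelC2_hasDerivAt_zero
    (ht : TwiceDiff t) (hr : TwiceDiff r) (hφ : TwiceDiff φ)
    (e1 : ∀ u, deriv (deriv t) u * Real.cosh (r u)
        + 4 * Real.sinh (r u) * deriv t u * deriv r u
        + 2 * Real.sqrt 2 * Real.sinh (r u) ^ 3 * deriv φ u * deriv r u = 0)
    (e2 : ∀ u, deriv (deriv r) u
        + 2 * Real.sqrt 2 * Real.sinh (r u) * Real.cosh (r u) * deriv t u * deriv φ u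
        + Real.sinh (r u) * Real.cosh (r u) * (2 * Real.cosh (r u) ^ 2 - 3) * (deriv φ u) ^ 2 = 0)
    (e3 : ∀ u, deriv (deriv φ) u * Real.sinh (r u) * Real.cosh (r u)
        - 2 * Real.sqrt 2 * deriv t u * deriv r u + 2 * deriv φ u * deriv r u = 0) :
    ∀ u, HasDerivAt (godelC2 t r φ) 0 u := by
  intro u
  have hφ1 : HasDerivAt φ (deriv φ u) u := (hφ.1 u).hasDerivAt
  have hφ2 : HasDerivAt (deriv φ) (deriv (deriv φ) u) u := (hφ.2 u).hasDerivAt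
  have hr1 : HasDerivAt r (deriv r u) u := (hr.1 u).hasDerivAt
  have hr2 : HasDerivAt (deriv r) (deriv (deriv r) u) u := (hr.2 u).hasDerivAt
  have ht2 : HasDerivAt (deriv t) (deriv (deriv t) u) u := (ht.2 u).hasDerivAt
  have hcos := hφ1.cos
  have hsin := hφ1.sin
  have h2r : HasDerivAt (fun x => 2 * r x) (2 * deriv r u) u := hr1.const_mul 2
  have hsinh := h2r.sinh
  have hcosh := h2r.cosh
  have hcm : HasDerivAt (fun x => Real.cosh (2 * r x) - 2)
      (Real.sinh (2 * r u) * (2 * deriv r u)) u := hcosh.sub_const 2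
  have H := ((((hsin.const_mul (Real.sqrt 2)).mul hsinh).mul ht2).add
      (hcos.mul hr2)).add ((((hsin.mul hcm).mul hsinh).div_const 2).mul hφ2)
  refine H.congr_deriv (Eq.symm ?_)
  simp only [Pi.mul_apply]
  rw [Real.sinh_two_mul, Real.cosh_two_mul]
  have hw : Real.sqrt 2 ^ 2 = 2 := Real.sq_sqrt (by norm_num)
  have hcs : Real.cosh (r u) ^ 2 - Real.sinh (r u) ^ 2 = 1 := Real.cosh_sq_sub_sinh_sq (r u)
  linear_combination
    (-(2 * Real.sqrt 2 * Real.sinh (r u) * Real.sin (φ u))) * e1 u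
    + (-Real.cos (φ u)) * e2 u
    + (-(Real.sin (φ u) * (Real.cosh (r u) ^ 2 + Real.sinh (r u) ^ 2 - 2))) * e3 u
    + (4 * Real.sinh (r u) ^ 4 * Real.sin (φ u) * deriv r u * deriv φ u) * hw
    + (-(-3 * Real.sin (φ u) * deriv r u * deriv φ u
        + Real.cosh (r u) ^ 2 * Real.sin (φ u) * deriv r u * deriv φ u
        - Real.sinh (r u) * Real.cosh (r u) * Real.cos (φ u) * (deriv φ u) ^ 2
        + 7 * Real.sinh (r u) ^ 2 * Real.sin (φ u) * deriv r u * deriv φ u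
        + 4 * Real.sqrt 2 * Real.sin (φ u) * deriv t u * deriv r u)) * hcs

end AuxGodel

/-- Along a geodesic, the radial velocity is bounded:
`|r'| ≤ √(c₁² + c₂²)` with `c₁ = C₁(u₀)`, `c₂ = C₂(u₀)`. -/
theorem godel_rdot_bounded (t r φ z : ℝ → ℝ)
    (ht : TwiceDiff t) (hr : TwiceDiff r) (hφ : TwiceDiff φ) (hz : TwiceDiff z)
    (hrpos : ∀ u, 0 < r u)
    (hgeo : GodelGeodesicEqns t r φ z)
    (u₀ : ℝ) (c₁ c₂ : ℝ)
    (hc₁ : c₁ = godelC1 t r φ u₀) (hc₂ : c₂ = godelC2 t r φ u₀) :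
    ∀ u : ℝ, |deriv r u| ≤ Real.sqrt (c₁ ^ 2 + c₂ ^ 2) := by
  have e1 : ∀ u, deriv (deriv t) u * Real.cosh (r u)
      + 4 * Real.sinh (r u) * deriv t u * deriv r u
      + 2 * Real.sqrt 2 * Real.sinh (r u) ^ 3 * deriv φ u * deriv r u = 0 := by
    intro u
    have h := (hgeo u).1
    rw [Real.tanh_eq_sinh_div_cosh] at h
    have hc : Real.cosh (r u) ≠ 0 := (Real.cosh_pos (r u)).ne'
    field_simp at h
    linear_combination h
  have e2 : ∀ u, deriv (deriv r) u
      + 2 * Real.sqrt 2 * Real.sinh (r u) * Real.cosh (r u) * deriv t u * deriv φ u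
      + Real.sinh (r u) * Real.cosh (r u) * (2 * Real.cosh (r u) ^ 2 - 3) * (deriv φ u) ^ 2 = 0 :=
    fun u => (hgeo u).2.1
  have e3 : ∀ u, deriv (deriv φ) u * Real.sinh (r u) * Real.cosh (r u)
      - 2 * Real.sqrt 2 * deriv t u * deriv r u + 2 * deriv φ u * deriv r u = 0 :=
    fun u => (hgeo u).2.2.1
  have k1 := godelC1_hasDerivAt_zero t r φ ht hr hφ e1 e2 e3
  have k2 := godelC2_hasDerivAt_zero t r φ ht hr hφ e1 e2 e3
  have hC1 : ∀ u, godelC1 t r φ u = c₁ := by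
    intro u
    rw [hc₁]
    exact is_const_of_deriv_eq_zero (fun x => (k1 x).differentiableAt)
      (fun x => (k1 x).deriv) u u₀
  have hC2 : ∀ u, godelC2 t r φ u = c₂ := by
    intro u
    rw [hc₂]
    exact is_const_of_deriv_eq_zero (fun x => (k2 x).differentiableAt)
      (fun x => (k2 x).deriv) u u₀
  intro u
  have hkey : deriv r u = Real.sin (φ u) * c₁ + Real.cos (φ u) * c₂ := by
    rw [← hC1 u, ← hC2 u]
    unfold godelC1 godelC2
    have pyth := Real.sin_sq_add_cos_sq (φ u)
    linear_combination (-(deriv r u)) * pyth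
  have hsq : (deriv r u) ^ 2 ≤ c₁ ^ 2 + c₂ ^ 2 := by
    have pyth := Real.sin_sq_add_cos_sq (φ u)
    have h' : c₁ ^ 2 + c₂ ^ 2 - (deriv r u) ^ 2
        = (Real.sin (φ u) * c₂ - Real.cos (φ u) * c₁) ^ 2 := by
      rw [hkey]
      linear_combination (-(c₁ ^ 2 + c₂ ^ 2)) * pyth
    nlinarith [sq_nonneg (Real.sin (φ u) * c₂ - Real.cos (φ u) * c₁), h']
  exact Real.abs_le_sqrt hsq
end

section
/- Let t, r, φ, z : ℝ → ℝ be a geodesic of Gödel's universe, fix u₀ ∈ ℝ, and set c₁ = C₁(u₀), c₂ = C₂(u₀), A = P_{2,0}(u₀). Then the angular velocity is bounded: |φ'(u)| ≤ 2√(c₁² + c₂²)/sinh(2r(u)) + |A|·2√2/cosh(r(u))² for every u ∈ ℝ. -/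
open Real

/-- Along a geodesic, the angular velocity is bounded:
`|φ'| ≤ 2√(c₁² + c₂²)/sinh(2r) + |A|·2√2/cosh(r)²`. -/
theorem godel_phidot_bounded (t r φ z : ℝ → ℝ)
    (ht : TwiceDiff t) (hr : TwiceDiff r) (hφ : TwiceDiff φ) (hz : TwiceDiff z)
    (hrpos : ∀ u, 0 < r u)
    (hgeo : GodelGeodesicEqns t r φ z)
    (u₀ : ℝ) (c₁ c₂ A : ℝ)
    (hc₁ : c₁ = godelC1 t r φ u₀) (hc₂ : c₂ = godelC2 t r φ u₀)
    (hA : A = godelP t r φ 2 0 u₀) :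
    ∀ u : ℝ, |deriv φ u|
      ≤ 2 * Real.sqrt (c₁ ^ 2 + c₂ ^ 2) / Real.sinh (2 * r u)
        + |A| * (2 * Real.sqrt 2) / Real.cosh (r u) ^ 2 := by
  have hw2 : Real.sqrt 2 ^ 2 = 2 := Real.sq_sqrt (by norm_num)
  have hwpos : (0:ℝ) < Real.sqrt 2 := by positivity
  have hw0 : Real.sqrt 2 ≠ 0 := hwpos.ne'
  have hcsq : ∀ v : ℝ, Real.cosh (r v) ^ 2 = Real.sinh (r v) ^ 2 + 1 :=
    fun v => Real.cosh_sq (r v)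
  -- cleared geodesic equations
  have E1 : ∀ v : ℝ, Real.cosh (r v) * deriv (deriv t) v
      + 4 * Real.sinh (r v) * deriv t v * deriv r v
      + 2 * Real.sqrt 2 * Real.sinh (r v) ^ 3 * deriv φ v * deriv r v = 0 := by
    intro v
    obtain ⟨e1, -, -, -⟩ := hgeo v
    rw [Real.tanh_eq_sinh_div_cosh] at e1
    have hc0 : Real.cosh (r v) ≠ 0 := (Real.cosh_pos (r v)).ne'
    field_simp at e1
    linear_combination e1
  have E2 : ∀ v : ℝ, deriv (deriv r) v
      + 2 * Real.sqrt 2 * Real.sinh (r v) * Real.cosh (r v) * deriv t v * deriv φ v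
      + Real.sinh (r v) * Real.cosh (r v) * (2 * Real.cosh (r v) ^ 2 - 3) * (deriv φ v) ^ 2 = 0 :=
    fun v => (hgeo v).2.1
  have E3 : ∀ v : ℝ, deriv (deriv φ) v * Real.sinh (r v) * Real.cosh (r v)
      - 2 * Real.sqrt 2 * deriv t v * deriv r v + 2 * deriv φ v * deriv r v = 0 :=
    fun v => (hgeo v).2.2.1
  have hconst : ∀ f : ℝ → ℝ, (∀ v : ℝ, HasDerivAt f 0 v) → ∀ x y : ℝ, f x = f y :=
    fun f h x y => is_const_of_deriv_eq_zero (fun v => (h v).differentiableAt)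
      (fun v => (h v).deriv) x y
  -- common HasDerivAt facts
  have hT : ∀ v : ℝ, HasDerivAt (deriv t) (deriv (deriv t) v) v := fun v => (ht.2 v).hasDerivAt
  have hR : ∀ v : ℝ, HasDerivAt (deriv r) (deriv (deriv r) v) v := fun v => (hr.2 v).hasDerivAt
  have hF : ∀ v : ℝ, HasDerivAt (deriv φ) (deriv (deriv φ) v) v := fun v => (hφ.2 v).hasDerivAt
  have hch : ∀ v : ℝ, HasDerivAt (fun x => Real.cosh (r x)) (Real.sinh (r v) * deriv r v) v :=
    fun v => ((hr.1 v).hasDerivAt).cosh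
  have hsh : ∀ v : ℝ, HasDerivAt (fun x => Real.sinh (r x)) (Real.cosh (r v) * deriv r v) v :=
    fun v => ((hr.1 v).hasDerivAt).sinh
  have hsin : ∀ v : ℝ, HasDerivAt (fun x => Real.sin (φ x)) (Real.cos (φ v) * deriv φ v) v :=
    fun v => ((hφ.1 v).hasDerivAt).sin
  have hcos : ∀ v : ℝ, HasDerivAt (fun x => Real.cos (φ x)) (-Real.sin (φ v) * deriv φ v) v :=
    fun v => ((hφ.1 v).hasDerivAt).cos
  -- conservation of P
  have hPconst : ∀ x y : ℝ, godelP t r φ 2 0 x = godelP t r φ 2 0 y := by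
    have hfun : (fun x => godelP t r φ 2 0 x)
        = (fun x => Real.cosh (r x) ^ 2 * deriv t x
            + Real.sqrt 2 / 2 * (Real.cosh (r x) ^ 2 * (Real.sinh (r x) ^ 2 * deriv φ x))) := by
      funext x
      simp only [godelP]
      field_simp
      linear_combination (-(Real.cosh (r x) ^ 2 * Real.sinh (r x) ^ 2 * deriv φ x)) * hw2
    intro x y
    have hzero : ∀ v : ℝ, HasDerivAt (fun x => Real.cosh (r x) ^ 2 * deriv t x
        + Real.sqrt 2 / 2 * (Real.cosh (r x) ^ 2 * (Real.sinh (r x) ^ 2 * deriv φ x))) 0 v := by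
      intro v
      have hbig := (((hch v).pow 2).mul (hT v)).add
        ((((hch v).pow 2).mul (((hsh v).pow 2).mul (hF v))).const_mul (Real.sqrt 2 / 2))
      refine hbig.congr_deriv ?_
      symm
      simp only [Pi.pow_apply, Pi.mul_apply, Pi.sub_apply, Pi.add_apply, Nat.cast_ofNat]
      linear_combination
        (-(Real.cosh (r v)) * E1 v)
        - (1/2 * Real.sinh (r v) * Real.cosh (r v) * Real.sqrt 2) * E3 v
        - (Real.sinh (r v) * Real.cosh (r v) * deriv t v * deriv r v) * hw2
        - (Real.sinh (r v) * Real.cosh (r v) * Real.sqrt 2 * deriv r v * deriv φ v) * hcsq v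
    exact (congrFun hfun x).trans ((hconst _ hzero x y).trans (congrFun hfun y).symm)
  -- conservation of C1
  have hC1const : ∀ x y : ℝ, godelC1 t r φ x = godelC1 t r φ y := by
    have hfun : (fun x => godelC1 t r φ x)
        = (fun x => -(2 * Real.sqrt 2) * (Real.cos (φ x) * (Real.sinh (r x) * (Real.cosh (r x) * deriv t x)))
            + Real.sin (φ x) * deriv r x
            - Real.cos (φ x) * ((2 * Real.cosh (r x) ^ 2 - 3)
                * (Real.sinh (r x) * (Real.cosh (r x) * deriv φ x)))) := by
      funext x
      simp only [godelC1, Real.sinh_two_mul, Real.cosh_two_mul, Real.cosh_sq]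
      ring
    intro x y
    have hzero : ∀ v : ℝ, HasDerivAt (fun x =>
        -(2 * Real.sqrt 2) * (Real.cos (φ x) * (Real.sinh (r x) * (Real.cosh (r x) * deriv t x)))
            + Real.sin (φ x) * deriv r x
            - Real.cos (φ x) * ((2 * Real.cosh (r x) ^ 2 - 3)
                * (Real.sinh (r x) * (Real.cosh (r x) * deriv φ x)))) 0 v := by
      intro v
      have hbig := ((((hcos v).mul ((hsh v).mul ((hch v).mul (hT v)))).const_mul
          (-(2 * Real.sqrt 2))).add ((hsin v).mul (hR v))).sub
        ((hcos v).mul (((((hch v).pow 2).const_mul 2).sub_const 3).mul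
          ((hsh v).mul ((hch v).mul (hF v)))))
      refine hbig.congr_deriv ?_
      symm
      simp only [Pi.pow_apply, Pi.mul_apply, Pi.sub_apply, Pi.add_apply, Nat.cast_ofNat]
      linear_combination
        (2 * Real.sinh (r v) * Real.sqrt 2 * Real.cos (φ v)) * E1 v
        - Real.sin (φ v) * E2 v
        - ((3 - 2 * Real.cosh (r v) ^ 2) * Real.cos (φ v)) * E3 v
        - (4 * Real.sinh (r v) ^ 4 * Real.cos (φ v) * deriv r v * deriv φ v) * hw2
        - (5 * Real.cos (φ v) * deriv r v * deriv φ v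
            - 6 * Real.sqrt 2 * Real.cos (φ v) * deriv t v * deriv r v
            - 2 * Real.cosh (r v) ^ 2 * Real.cos (φ v) * deriv r v * deriv φ v
            - 8 * Real.sinh (r v) ^ 2 * Real.cos (φ v) * deriv r v * deriv φ v) * hcsq v
    exact (congrFun hfun x).trans ((hconst _ hzero x y).trans (congrFun hfun y).symm)
  -- conservation of C2
  have hC2const : ∀ x y : ℝ, godelC2 t r φ x = godelC2 t r φ y := by
    have hfun : (fun x => godelC2 t r φ x)
        = (fun x => (2 * Real.sqrt 2) * (Real.sin (φ x) * (Real.sinh (r x) * (Real.cosh (r x) * deriv t x)))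
            + Real.cos (φ x) * deriv r x
            + Real.sin (φ x) * ((2 * Real.cosh (r x) ^ 2 - 3)
                * (Real.sinh (r x) * (Real.cosh (r x) * deriv φ x)))) := by
      funext x
      simp only [godelC2, Real.sinh_two_mul, Real.cosh_two_mul, Real.cosh_sq]
      ring
    intro x y
    have hzero : ∀ v : ℝ, HasDerivAt (fun x =>
        (2 * Real.sqrt 2) * (Real.sin (φ x) * (Real.sinh (r x) * (Real.cosh (r x) * deriv t x)))
            + Real.cos (φ x) * deriv r x
            + Real.sin (φ x) * ((2 * Real.cosh (r x) ^ 2 - 3)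
                * (Real.sinh (r x) * (Real.cosh (r x) * deriv φ x)))) 0 v := by
      intro v
      have hbig := ((((hsin v).mul ((hsh v).mul ((hch v).mul (hT v)))).const_mul
          (2 * Real.sqrt 2)).add ((hcos v).mul (hR v))).add
        ((hsin v).mul (((((hch v).pow 2).const_mul 2).sub_const 3).mul
          ((hsh v).mul ((hch v).mul (hF v)))))
      refine hbig.congr_deriv ?_
      symm
      simp only [Pi.pow_apply, Pi.mul_apply, Pi.sub_apply, Pi.add_apply, Nat.cast_ofNat]
      linear_combination
        (-(2 * Real.sinh (r v) * Real.sqrt 2 * Real.sin (φ v))) * E1 v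
        - Real.cos (φ v) * E2 v
        - ((2 * Real.cosh (r v) ^ 2 - 3) * Real.sin (φ v)) * E3 v
        + (4 * Real.sinh (r v) ^ 4 * Real.sin (φ v) * deriv r v * deriv φ v) * hw2
        + (5 * Real.sin (φ v) * deriv r v * deriv φ v
            - 6 * Real.sqrt 2 * Real.sin (φ v) * deriv t v * deriv r v
            - 2 * Real.cosh (r v) ^ 2 * Real.sin (φ v) * deriv r v * deriv φ v
            - 8 * Real.sinh (r v) ^ 2 * Real.sin (φ v) * deriv r v * deriv φ v) * hcsq v
    exact (congrFun hfun x).trans ((hconst _ hzero x y).trans (congrFun hfun y).symm)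
  -- final pointwise bound
  intro u
  have hs : (0:ℝ) < Real.sinh (r u) := Real.sinh_pos_iff.mpr (hrpos u)
  have hc : (0:ℝ) < Real.cosh (r u) := Real.cosh_pos (r u)
  have hc1u : c₁ = godelC1 t r φ u := hc₁.trans (hC1const u₀ u)
  have hc2u : c₂ = godelC2 t r φ u := hc₂.trans (hC2const u₀ u)
  have hAu : A = godelP t r φ 2 0 u := hA.trans (hPconst u₀ u)
  simp only [godelC1, godelC2, Real.sinh_two_mul, Real.cosh_two_mul] at hc1u hc2u
  have hQeq : -c₁ * Real.cos (φ u) + c₂ * Real.sin (φ u)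
      = 2 * Real.sqrt 2 * Real.sinh (r u) * Real.cosh (r u) * deriv t u
        + (2 * Real.cosh (r u) ^ 2 - 3) * Real.sinh (r u) * Real.cosh (r u) * deriv φ u := by
    rw [hc1u, hc2u]
    linear_combination (2 * Real.sqrt 2 * Real.sinh (r u) * Real.cosh (r u) * deriv t u
        + (Real.cosh (r u) ^ 2 + Real.sinh (r u) ^ 2 - 2) * Real.sinh (r u) * Real.cosh (r u)
          * deriv φ u) * (Real.sin_sq_add_cos_sq (φ u))
      - (Real.sinh (r u) * Real.cosh (r u) * deriv φ u) * hcsq u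
  have hAeq : Real.sqrt 2 * A = Real.sqrt 2 * Real.cosh (r u) ^ 2 * deriv t u
      + Real.cosh (r u) ^ 2 * Real.sinh (r u) ^ 2 * deriv φ u := by
    rw [hAu]
    simp only [godelP]
    field_simp
    ring
  have hkey : Real.sinh (r u) * Real.cosh (r u) ^ 2 * deriv φ u
      = 2 * Real.sqrt 2 * Real.sinh (r u) * A
        - Real.cosh (r u) * (-c₁ * Real.cos (φ u) + c₂ * Real.sin (φ u)) := by
    linear_combination (-2 * Real.sinh (r u)) * hAeq + Real.cosh (r u) * hQeq
      + (2 * Real.sinh (r u) * Real.cosh (r u) ^ 2 * deriv φ u) * hcsq u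
  have hsc2 : (0:ℝ) < Real.sinh (r u) * Real.cosh (r u) ^ 2 :=
    mul_pos hs (pow_pos hc 2)
  have hFeq : deriv φ u = (2 * Real.sqrt 2 * Real.sinh (r u) * A
      - Real.cosh (r u) * (-c₁ * Real.cos (φ u) + c₂ * Real.sin (φ u)))
        / (Real.sinh (r u) * Real.cosh (r u) ^ 2) := by
    rw [eq_div_iff hsc2.ne']
    linear_combination hkey
  have hQabs : |(-c₁ * Real.cos (φ u) + c₂ * Real.sin (φ u))| ≤ Real.sqrt (c₁ ^ 2 + c₂ ^ 2) := by
    rw [← Real.sqrt_sq_eq_abs]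
    apply Real.sqrt_le_sqrt
    have h1 := Real.sin_sq_add_cos_sq (φ u)
    nlinarith [sq_nonneg (c₁ * Real.sin (φ u) + c₂ * Real.cos (φ u)), sq_nonneg c₁, sq_nonneg c₂]
  rw [Real.sinh_two_mul]
  calc |deriv φ u|
      = |2 * Real.sqrt 2 * Real.sinh (r u) * A
          - Real.cosh (r u) * (-c₁ * Real.cos (φ u) + c₂ * Real.sin (φ u))|
        / (Real.sinh (r u) * Real.cosh (r u) ^ 2) := by
        rw [hFeq, abs_div, abs_of_pos hsc2]
    _ ≤ (2 * Real.sqrt 2 * Real.sinh (r u) * |A|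
          + Real.cosh (r u) * |(-c₁ * Real.cos (φ u) + c₂ * Real.sin (φ u))|)
        / (Real.sinh (r u) * Real.cosh (r u) ^ 2) := by
        apply (div_le_div_iff_of_pos_right hsc2).mpr
        refine (abs_sub _ _).trans ?_
        rw [abs_mul (2 * Real.sqrt 2 * Real.sinh (r u)) A,
          abs_mul (Real.cosh (r u)) (-c₁ * Real.cos (φ u) + c₂ * Real.sin (φ u)),
          abs_of_pos hc,
          abs_of_pos (show (0:ℝ) < 2 * Real.sqrt 2 * Real.sinh (r u) by positivity)]
    _ ≤ (2 * Real.sqrt 2 * Real.sinh (r u) * |A|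
          + Real.cosh (r u) * Real.sqrt (c₁ ^ 2 + c₂ ^ 2))
        / (Real.sinh (r u) * Real.cosh (r u) ^ 2) := by
        gcongr
    _ = 2 * Real.sqrt (c₁ ^ 2 + c₂ ^ 2) / (2 * Real.sinh (r u) * Real.cosh (r u))
        + |A| * (2 * Real.sqrt 2) / Real.cosh (r u) ^ 2 := by
        field_simp
        ring
end

section
/- Let t, r, φ, z : ℝ → ℝ be a geodesic of Gödel's universe, fix u₀ ∈ ℝ, and set c₁ = C₁(u₀), c₂ = C₂(u₀), A = P_{2,0}(u₀), B = P_{0,1}(u₀). Then there exists a real number m such that for every u ∈ ℝ: c₂·sin(φ(u)) − c₁·cos(φ(u)) = (2√2/sinh(2r(u)))·(A·cosh(2r(u)) − B·cosh(r(u))²) + m. -/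
open Real

/-- Along a geodesic there is a constant `m` such that
`c₂·sin φ − c₁·cos φ = (2√2/sinh 2r)·(A·cosh 2r − B·cosh(r)²) + m`. -/
theorem godel_orbit_equation (t r φ z : ℝ → ℝ)
    (ht : TwiceDiff t) (hr : TwiceDiff r) (hφ : TwiceDiff φ) (hz : TwiceDiff z)
    (hrpos : ∀ u, 0 < r u)
    (hgeo : GodelGeodesicEqns t r φ z)
    (u₀ : ℝ) (c₁ c₂ A B : ℝ)
    (hc₁ : c₁ = godelC1 t r φ u₀) (hc₂ : c₂ = godelC2 t r φ u₀)
    (hA : A = godelP t r φ 2 0 u₀) (hB : B = godelP t r φ 0 1 u₀) :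
    ∃ m : ℝ, ∀ u : ℝ,
      c₂ * Real.sin (φ u) - c₁ * Real.cos (φ u)
        = 2 * Real.sqrt 2 / Real.sinh (2 * r u)
            * (A * Real.cosh (2 * r u) - B * Real.cosh (r u) ^ 2) + m := by
  obtain ⟨ht1, ht2⟩ := ht
  obtain ⟨hr1, hr2⟩ := hr
  obtain ⟨hφ1, hφ2⟩ := hφ
  have hq : Real.sqrt 2 ^ 2 = 2 := Real.sq_sqrt (by norm_num)
  have hq0 : Real.sqrt 2 ≠ 0 := by positivity
  have e1' : ∀ x, deriv (deriv t) x * Real.cosh (r x)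
      + 4 * Real.sinh (r x) * deriv t x * deriv r x
      + 2 * Real.sqrt 2 * Real.sinh (r x)^3 * deriv φ x * deriv r x = 0 := by
    intro x
    have h1 := (hgeo x).1
    have hc : Real.cosh (r x) ≠ 0 := (Real.cosh_pos _).ne'
    rw [Real.tanh_eq_sinh_div_cosh] at h1
    field_simp at h1
    linarith
  -- C1 is conserved
  have HC1 : ∀ x : ℝ, HasDerivAt (godelC1 t r φ) 0 x := by
    intro x
    have hT := (ht2 x).hasDerivAt
    have hR := (hr2 x).hasDerivAt
    have hF := (hφ2 x).hasDerivAt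
    have hr0 := (hr1 x).hasDerivAt
    have hφ0 := (hφ1 x).hasDerivAt
    have hsin := hφ0.sin
    have hcos := hφ0.cos
    have hsinh := hr0.sinh
    have hcosh := hr0.cosh
    have h2r := hr0.const_mul (2:ℝ)
    have hsinh2 := h2r.sinh
    have hcosh2 := h2r.cosh
    have hC := Real.cosh_sq (r x)
    have e1x := e1' x
    have e2x := (hgeo x).2.1
    have e3x := (hgeo x).2.2.1
    have H := ((((hcos.const_mul (-(Real.sqrt 2))).mul hsinh2).mul hT).add (hsin.mul hR)).sub
      ((((hcos.mul (hcosh2.sub_const 2)).mul hsinh2).div_const 2).mul hF)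
    have heq : godelC1 t r φ = fun u => -(Real.sqrt 2) * Real.cos (φ u) * Real.sinh (2 * r u) * deriv t u
      + Real.sin (φ u) * deriv r u
      - Real.cos (φ u) * (Real.cosh (2 * r u) - 2) * Real.sinh (2 * r u) / 2 * deriv φ u := rfl
    rw [heq]
    refine H.congr_deriv ?_
    symm
    simp only [Pi.mul_apply, Pi.pow_apply]
    simp only [Real.sinh_two_mul, Real.cosh_two_mul]
    linear_combination -((-2 * (Real.sqrt 2) * (Real.sinh (r x)) * (Real.cos (φ x))) * e1x + ((Real.sin (φ x))) * e2x + (2 * (Real.cos (φ x)) + -1 * (Real.cosh (r x))^2 * (Real.cos (φ x)) + -1 * (Real.sinh (r x))^2 * (Real.cos (φ x))) * e3x + (4 * (Real.sinh (r x))^4 * (Real.cos (φ x)) * (deriv r x) * (deriv φ x)) * hq + (3 * (Real.cos (φ x)) * (deriv r x) * (deriv φ x) + -1 * (Real.cosh (r x))^2 * (Real.cos (φ x)) * (deriv r x) * (deriv φ x) + -1 * (Real.sinh (r x)) * (Real.cosh (r x)) * (Real.sin (φ x)) * (deriv φ x)^2 + -7 * (Real.sinh (r x))^2 * (Real.cos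 (φ x)) * (deriv r x) * (deriv φ x) + -4 * (Real.sqrt 2) * (Real.cos (φ x)) * (deriv t x) * (deriv r x)) * hC)
  -- C2 is conserved
  have HC2 : ∀ x : ℝ, HasDerivAt (godelC2 t r φ) 0 x := by
    intro x
    have hT := (ht2 x).hasDerivAt
    have hR := (hr2 x).hasDerivAt
    have hF := (hφ2 x).hasDerivAt
    have hr0 := (hr1 x).hasDerivAt
    have hφ0 := (hφ1 x).hasDerivAt
    have hsin := hφ0.sin
    have hcos := hφ0.cos
    have hsinh := hr0.sinh
    have hcosh := hr0.cosh
    have h2r := hr0.const_mul (2:ℝ)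
    have hsinh2 := h2r.sinh
    have hcosh2 := h2r.cosh
    have hC := Real.cosh_sq (r x)
    have e1x := e1' x
    have e2x := (hgeo x).2.1
    have e3x := (hgeo x).2.2.1
    have H := ((((hsin.const_mul (Real.sqrt 2)).mul hsinh2).mul hT).add (hcos.mul hR)).add
      ((((hsin.mul (hcosh2.sub_const 2)).mul hsinh2).div_const 2).mul hF)
    have heq : godelC2 t r φ = fun u => Real.sqrt 2 * Real.sin (φ u) * Real.sinh (2 * r u) * deriv t u
      + Real.cos (φ u) * deriv r u
      + Real.sin (φ u) * (Real.cosh (2 * r u) - 2) * Real.sinh (2 * r u) / 2 * deriv φ u := rfl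
    rw [heq]
    refine H.congr_deriv ?_
    symm
    simp only [Pi.mul_apply, Pi.pow_apply]
    simp only [Real.sinh_two_mul, Real.cosh_two_mul]
    linear_combination -((2 * (Real.sqrt 2) * (Real.sinh (r x)) * (Real.sin (φ x))) * e1x + ((Real.cos (φ x))) * e2x + (-2 * (Real.sin (φ x)) + (Real.cosh (r x))^2 * (Real.sin (φ x)) + (Real.sinh (r x))^2 * (Real.sin (φ x))) * e3x + (-4 * (Real.sinh (r x))^4 * (Real.sin (φ x)) * (deriv r x) * (deriv φ x)) * hq + (-3 * (Real.sin (φ x)) * (deriv r x) * (deriv φ x) + (Real.cosh (r x))^2 * (Real.sin (φ x)) * (deriv r x) * (deriv φ x) + -1 * (Real.sinh (r x)) * (Real.cosh (r x)) * (Real.cos (φ x)) * (deriv φ x)^2 + 7 * (Real.sinh (r x))^2 * (Real.sin (φ x)) * (deriv r x) * (deriv φ x) + 4 * (Real.sqrt 2) * (Real.sin (φ x)) * (deriv t x) * (deriv r x)) * hC)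
  -- simplified forms of the momenta
  have hP20eq : ∀ x, godelP t r φ 2 0 x
      = Real.cosh (r x)^2 * deriv t x
        + Real.sqrt 2 / 2 * (Real.cosh (r x)^2 * Real.sinh (r x)^2) * deriv φ x := by
    intro x
    unfold godelP
    field_simp
    ring_nf
    linear_combination (-1 * Real.sinh (r x)^2 * Real.cosh (r x)^2 * deriv φ x) * hq
  have hP01eq : ∀ x, godelP t r φ 0 1 x
      = deriv t x + Real.sqrt 2 * Real.sinh (r x)^2 * deriv φ x := by
    intro x
    unfold godelP
    field_simp
    ring_nf
    linear_combination (-2 * Real.sinh (r x)^2 * deriv φ x) * hq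
  -- P20 is conserved
  have HP20 : ∀ x : ℝ, HasDerivAt (fun u => Real.cosh (r u)^2 * deriv t u
      + Real.sqrt 2 / 2 * (Real.cosh (r u)^2 * Real.sinh (r u)^2) * deriv φ u) 0 x := by
    intro x
    have hT := (ht2 x).hasDerivAt
    have hR := (hr2 x).hasDerivAt
    have hF := (hφ2 x).hasDerivAt
    have hr0 := (hr1 x).hasDerivAt
    have hφ0 := (hφ1 x).hasDerivAt
    have hsin := hφ0.sin
    have hcos := hφ0.cos
    have hsinh := hr0.sinh
    have hcosh := hr0.cosh
    have h2r := hr0.const_mul (2:ℝ)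
    have hsinh2 := h2r.sinh
    have hcosh2 := h2r.cosh
    have hC := Real.cosh_sq (r x)
    have e1x := e1' x
    have e2x := (hgeo x).2.1
    have e3x := (hgeo x).2.2.1
    have H := (((hcosh.pow 2).mul hT).add
      ((((hcosh.pow 2).mul (hsinh.pow 2)).const_mul (Real.sqrt 2 / 2)).mul hF))
    refine H.congr_deriv ?_
    symm
    simp only [Pi.mul_apply, Pi.pow_apply]
    linear_combination -(((Real.cosh (r x))) * e1x + 0 * e2x + ((1/2) * (Real.sqrt 2) * (Real.sinh (r x)) * (Real.cosh (r x))) * e3x + ((Real.sinh (r x)) * (Real.cosh (r x)) * (deriv t x) * (deriv r x)) * hq + ((Real.sqrt 2) * (Real.sinh (r x)) * (Real.cosh (r x)) * (deriv r x) * (deriv φ x)) * hC)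
  -- P01 is conserved
  have HP01 : ∀ x : ℝ, HasDerivAt (fun u => deriv t u
      + Real.sqrt 2 * Real.sinh (r u)^2 * deriv φ u) 0 x := by
    intro x
    have hT := (ht2 x).hasDerivAt
    have hR := (hr2 x).hasDerivAt
    have hF := (hφ2 x).hasDerivAt
    have hr0 := (hr1 x).hasDerivAt
    have hφ0 := (hφ1 x).hasDerivAt
    have hsin := hφ0.sin
    have hcos := hφ0.cos
    have hsinh := hr0.sinh
    have hcosh := hr0.cosh
    have h2r := hr0.const_mul (2:ℝ)
    have hsinh2 := h2r.sinh
    have hcosh2 := h2r.cosh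
    have hC := Real.cosh_sq (r x)
    have e1x := e1' x
    have e2x := (hgeo x).2.1
    have e3x := (hgeo x).2.2.1
    have H := (hT.add ((((hsinh.pow 2).const_mul (Real.sqrt 2)).mul hF)))
    refine H.congr_deriv ?_
    symm
    have hc : Real.cosh (r x) ≠ 0 := (Real.cosh_pos _).ne'
    rw [← sub_eq_zero]
    have hmul : (0 - (deriv (deriv t) x + (Real.sqrt 2 * (2 * Real.sinh (r x) ^ 1 * (Real.cosh (r x) * deriv r x)) * deriv φ x + Real.sqrt 2 * Real.sinh (r x) ^ 2 * deriv (deriv φ) x))) * Real.cosh (r x) = 0 := by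
      linear_combination -((1) * e1x + 0 * e2x + ((Real.sqrt 2) * (Real.sinh (r x))) * e3x + (2 * (Real.sinh (r x)) * (deriv t x) * (deriv r x)) * hq + (2 * (Real.sqrt 2) * (Real.sinh (r x)) * (deriv r x) * (deriv φ x)) * hC)
    exact (mul_eq_zero.mp hmul).resolve_right hc
  -- constancy
  have constOf : ∀ (f : ℝ → ℝ), (∀ x : ℝ, HasDerivAt f 0 x) → ∀ x, f x = f u₀ := by
    intro f hf x
    exact is_const_of_deriv_eq_zero (fun y => (hf y).differentiableAt)
      (fun y => (hf y).deriv) x u₀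
  refine ⟨0, fun u => ?_⟩
  have hc1u := constOf _ HC1 u
  have hc2u := constOf _ HC2 u
  have hg20 := constOf _ HP20
  have hg01 := constOf _ HP01
  have hAu : A = Real.cosh (r u)^2 * deriv t u
      + Real.sqrt 2 / 2 * (Real.cosh (r u)^2 * Real.sinh (r u)^2) * deriv φ u := by
    rw [hA, hP20eq u₀, ← hg20 u]
  have hBu : B = deriv t u + Real.sqrt 2 * Real.sinh (r u)^2 * deriv φ u := by
    rw [hB, hP01eq u₀, ← hg01 u]
  have hc1u' : c₁ = godelC1 t r φ u := by rw [hc₁, ← hc1u]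
  have hc2u' : c₂ = godelC2 t r φ u := by rw [hc₂, ← hc2u]
  have hS : 0 < Real.sinh (r u) := Real.sinh_pos_iff.mpr (hrpos u)
  have hCpos : 0 < Real.cosh (r u) := Real.cosh_pos _
  have hs2 : Real.sinh (2 * r u) = 2 * (Real.sinh (r u) * Real.cosh (r u)) := by
    rw [Real.sinh_two_mul]; ring
  have hs2ne : Real.sinh (2 * r u) ≠ 0 := by
    rw [hs2]; exact (by positivity : (0:ℝ) < 2 * (Real.sinh (r u) * Real.cosh (r u))).ne'
  rw [hc1u', hc2u', hAu, hBu, add_zero, div_mul_eq_mul_div, eq_div_iff hs2ne, hs2]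
  unfold godelC1 godelC2
  simp only [Real.sinh_two_mul, Real.cosh_two_mul]
  have hC := Real.cosh_sq (r u)
  have hsin := Real.sin_sq_add_cos_sq (φ u)
  linear_combination 2 * (((Real.sinh (r u))^2 * (Real.cosh (r u))^2 * (deriv φ u) + (-1/2) * (Real.sinh (r u))^2 * (Real.cosh (r u))^4 * (deriv φ u) + (-1/2) * (Real.sinh (r u))^4 * (Real.cosh (r u))^2 * (deriv φ u)) * hq + ((Real.sinh (r u))^2 * (deriv φ u) + -1 * (Real.sinh (r u))^2 * (Real.cos (φ u))^2 * (deriv φ u) + -1 * (Real.sinh (r u))^2 * (Real.sin (φ u))^2 * (deriv φ u) + -1 * (Real.sinh (r u))^2 * (Real.cosh (r u))^2 * (deriv φ u) + (Real.sinh (r u))^2 * (Real.cosh (r u))^2 * (Real.cos (φ u))^2 * (deriv φ u) + (Real.sinh (r u))^2 * (Real.cosh (r u))^2 * (Real.sin (φ u))^2 * (deriv φ u) + -2 * (Real.sinh (r u))^4 * (deriv φ u) + 2 * (Real.sinh (r u))^4 * (Real.cos (φ u))^2 * (deriv φ u) + 2 * (Real.sinh (r u))^4 * (Real.sin (φ u))^2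 * (deriv φ u) + -1 * (Real.sqrt 2) * (Real.cosh (r u))^2 * (deriv t u) + -2 * (Real.sqrt 2) * (Real.sinh (r u))^2 * (deriv t u) + 2 * (Real.sqrt 2) * (Real.sinh (r u))^2 * (Real.cos (φ u))^2 * (deriv t u) + 2 * (Real.sqrt 2) * (Real.sinh (r u))^2 * (Real.sin (φ u))^2 * (deriv t u)) * hC + (-1 * (Real.sinh (r u))^2 * (deriv φ u) + (Real.sinh (r u))^4 * (deriv φ u) + 2 * (Real.sinh (r u))^6 * (deriv φ u) + 2 * (Real.sqrt 2) * (Real.sinh (r u))^2 * (deriv t u) + 2 * (Real.sqrt 2) * (Real.sinh (r u))^4 * (deriv t u)) * hsin)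
end

section
/- Let f : ℝ → ℝ be twice differentiable. Then f satisfies the differential equation 2·cosh(2r)·f'(r) = sinh(2r)·f''(r) for all r > 0 if and only if there exist real constants ρ₁, ρ₂ such that f(r) = ρ₂ + (ρ₁/2)·cosh(r)² for all r > 0. -/
open Real

lemma const_on_Ioi {g : ℝ → ℝ}
    (hg : ∀ x ∈ Set.Ioi (0:ℝ), DifferentiableAt ℝ g x)
    (hg' : ∀ x ∈ Set.Ioi (0:ℝ), deriv g x = 0)
    {x y : ℝ} (hx : x ∈ Set.Ioi (0:ℝ)) (hy : y ∈ Set.Ioi (0:ℝ)) : g x = g y := by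
  refine (convex_Ioi 0).is_const_of_fderivWithin_eq_zero
    (fun z hz => (hg z hz).differentiableWithinAt) (fun z hz => ?_) hx hy
  rw [fderivWithin_of_isOpen isOpen_Ioi hz]
  ext1
  show fderiv ℝ g z 1 = 0
  rw [← deriv, hg' z hz]

lemma hasDerivAt_sinh2 (z : ℝ) :
    HasDerivAt (fun r : ℝ => Real.sinh (2 * r)) (Real.cosh (2 * z) * 2) z := by
  exact ((Real.hasDerivAt_sinh (2 * z)).comp z ((hasDerivAt_id z).const_mul 2)).congr_deriv (by ring)

lemma hasDerivAt_cosh2 (z : ℝ) :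
    HasDerivAt (fun r : ℝ => Real.cosh (2 * r)) (Real.sinh (2 * z) * 2) z := by
  exact ((Real.hasDerivAt_cosh (2 * z)).comp z ((hasDerivAt_id z).const_mul 2)).congr_deriv (by ring)

/-- A twice-differentiable `f` satisfies `2·cosh(2r)·f' = sinh(2r)·f''`
for all `r > 0` iff `f(r) = ρ₂ + (ρ₁/2)·cosh(r)²` on `(0,∞)` for some constants. -/
theorem godel_fstar_ode (f : ℝ → ℝ) (hf : TwiceDiff f) :
    (∀ r : ℝ, 0 < r →
        2 * Real.cosh (2 * r) * deriv f r = Real.sinh (2 * r) * deriv (deriv f) r)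
      ↔ (∃ ρ₁ ρ₂ : ℝ, ∀ r : ℝ, 0 < r → f r = ρ₂ + ρ₁ / 2 * Real.cosh r ^ 2) := by
  have hf1 := hf.1
  have hf2 := hf.2
  constructor
  · intro hODE
    have hsne : ∀ z : ℝ, 0 < z → Real.sinh (2 * z) ≠ 0 := fun z hz =>
      ne_of_gt (Real.sinh_pos_iff.mpr (by linarith))
    set q : ℝ → ℝ := fun r => deriv f r / Real.sinh (2 * r) with hqdef
    have hq : ∀ z ∈ Set.Ioi (0:ℝ), HasDerivAt q 0 z := by
      intro z hz
      rw [Set.mem_Ioi] at hz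
      have h := (hf2 z).hasDerivAt.div (hasDerivAt_sinh2 z) (hsne z hz)
      refine h.congr_deriv ?_
      rw [div_eq_zero_iff]
      left
      linear_combination -(hODE z hz)
    have hc : ∀ z ∈ Set.Ioi (0:ℝ), q z = q 1 := fun z hz =>
      const_on_Ioi (fun x hx => (hq x hx).differentiableAt)
        (fun x hx => (hq x hx).deriv) hz (by norm_num)
    set c : ℝ := q 1 with hcdef
    have hd1 : ∀ z : ℝ, 0 < z → deriv f z = c * Real.sinh (2 * z) := by
      intro z hz
      have := hc z hz
      rw [hqdef] at this
      field_simp at this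
      linarith [this]
    set ψ : ℝ → ℝ := fun r => f r - c / 2 * Real.cosh (2 * r) with hψdef
    have hψ : ∀ z ∈ Set.Ioi (0:ℝ), HasDerivAt ψ 0 z := by
      intro z hz
      rw [Set.mem_Ioi] at hz
      have h := (hf1 z).hasDerivAt.sub ((hasDerivAt_cosh2 z).const_mul (c / 2))
      refine h.congr_deriv ?_
      rw [hd1 z hz]
      ring
    refine ⟨2 * c, ψ 1 - c / 2, fun z hz => ?_⟩
    have hcz : ψ z = ψ 1 :=
      const_on_Ioi (fun x hx => (hψ x hx).differentiableAt)
        (fun x hx => (hψ x hx).deriv) hz (by norm_num)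
    have : f z = ψ 1 + c / 2 * Real.cosh (2 * z) := by
      rw [← hcz]; simp [hψdef]
    rw [this, Real.cosh_two_mul, Real.sinh_sq]
    ring
  · rintro ⟨ρ₁, ρ₂, hE⟩ r hr
    set g : ℝ → ℝ := fun s => ρ₂ + ρ₁ / 2 * Real.cosh s ^ 2 with hgdef
    have hev : f =ᶠ[nhds r] g :=
      Filter.eventuallyEq_of_mem (Ioi_mem_nhds hr) (fun s hs => hE s hs)
    have hg : ∀ s : ℝ, HasDerivAt g (ρ₁ * (Real.cosh s * Real.sinh s)) s := by
      intro s
      have h1 := (((Real.hasDerivAt_cosh s).pow 2).const_mul (ρ₁ / 2)).const_add ρ₂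
      refine h1.congr_deriv ?_
      push_cast
      ring
    have hdg : deriv g = fun s => ρ₁ * (Real.cosh s * Real.sinh s) :=
      funext fun s => (hg s).deriv
    have hg2 : HasDerivAt (fun s => ρ₁ * (Real.cosh s * Real.sinh s))
        (ρ₁ * (Real.sinh r ^ 2 + Real.cosh r ^ 2)) r := by
      have h := ((Real.hasDerivAt_cosh r).mul (Real.hasDerivAt_sinh r)).const_mul ρ₁
      refine h.congr_deriv ?_
      ring
    have e1 : deriv f r = ρ₁ * (Real.cosh r * Real.sinh r) := by
      rw [hev.deriv_eq]; exact (hg r).deriv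
    have e2 : deriv (deriv f) r = ρ₁ * (Real.sinh r ^ 2 + Real.cosh r ^ 2) := by
      rw [hev.deriv.deriv_eq, hdg]; exact hg2.deriv
    rw [e1, e2, Real.cosh_two_mul, Real.sinh_two_mul]
    ring
end

section
/- For real constants ρ₁, ρ₂, define f*(r) = ρ₂ + (ρ₁/2)·cosh(r)² and g*(r) = (ρ₁ + 8ρ₂ + ρ₁·cosh(2r))·sinh(r)²/(4√2). Then for all r > 0 the pair (f*, g*) satisfies the coupled system: f*'(r) = −4√2·g*(r)/sinh(2r) + 4·f*(r)·tanh(r), and g*'(r) = 4·(g*(r) + √2·f*(r)·sinh(r)⁴)/sinh(2r). -/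
open Real

/-- The radial profile function `f*`. -/
noncomputable def fstar (ρ₁ ρ₂ : ℝ) (r : ℝ) : ℝ :=
  ρ₂ + ρ₁ / 2 * Real.cosh r ^ 2

/-- The radial profile function `g*`. -/
noncomputable def gstar (ρ₁ ρ₂ : ℝ) (r : ℝ) : ℝ :=
  (ρ₁ + 8 * ρ₂ + ρ₁ * Real.cosh (2 * r)) * Real.sinh r ^ 2 / (4 * Real.sqrt 2)

lemma fstar_deriv (ρ₁ ρ₂ r : ℝ) :
    deriv (fstar ρ₁ ρ₂) r = ρ₁ * Real.cosh r * Real.sinh r := by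
  have h : HasDerivAt (fstar ρ₁ ρ₂) (ρ₁ * Real.cosh r * Real.sinh r) r := by
    have := ((Real.hasDerivAt_cosh r).pow 2).const_mul (ρ₁ / 2)
    have h2 := this.const_add ρ₂
    exact h2.congr_deriv (by norm_num; ring)
  exact h.deriv

lemma gstar_deriv (ρ₁ ρ₂ r : ℝ) :
    deriv (gstar ρ₁ ρ₂) r
      = ((ρ₁ * (Real.sinh (2 * r) * 2)) * Real.sinh r ^ 2
         + (ρ₁ + 8 * ρ₂ + ρ₁ * Real.cosh (2 * r)) * (2 * Real.sinh r * Real.cosh r))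
        / (4 * Real.sqrt 2) := by
  have hc : HasDerivAt (fun r : ℝ => Real.cosh (2 * r)) (Real.sinh (2 * r) * 2) r := by
    exact ((Real.hasDerivAt_cosh (2 * r)).comp r ((hasDerivAt_id r).const_mul 2)).congr_deriv (by ring)
  have hA : HasDerivAt (fun r : ℝ => ρ₁ + 8 * ρ₂ + ρ₁ * Real.cosh (2 * r))
      (ρ₁ * (Real.sinh (2 * r) * 2)) r := by
    simpa using (hc.const_mul ρ₁).const_add (ρ₁ + 8 * ρ₂)
  have hB : HasDerivAt (fun r : ℝ => Real.sinh r ^ 2) (2 * Real.sinh r * Real.cosh r) r := by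
    exact ((Real.hasDerivAt_sinh r).pow 2).congr_deriv (by norm_num)
  have h := ((hA.mul hB).div_const (4 * Real.sqrt 2))
  have h2 : HasDerivAt (gstar ρ₁ ρ₂)
      (((ρ₁ * (Real.sinh (2 * r) * 2)) * Real.sinh r ^ 2
         + (ρ₁ + 8 * ρ₂ + ρ₁ * Real.cosh (2 * r)) * (2 * Real.sinh r * Real.cosh r))
        / (4 * Real.sqrt 2)) r := by
    exact h
  exact h2.deriv

/-- The pair `(f*, g*)` satisfies the coupled radial system. -/
theorem godel_fstar_gstar_system (ρ₁ ρ₂ : ℝ) :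
    ∀ r : ℝ, 0 < r →
      (deriv (fstar ρ₁ ρ₂) r
          = -(4 * Real.sqrt 2) * gstar ρ₁ ρ₂ r / Real.sinh (2 * r)
            + 4 * fstar ρ₁ ρ₂ r * Real.tanh r)
      ∧ (deriv (gstar ρ₁ ρ₂) r
          = 4 * (gstar ρ₁ ρ₂ r + Real.sqrt 2 * fstar ρ₁ ρ₂ r * Real.sinh r ^ 4)
              / Real.sinh (2 * r)) := by
  intro r hr
  have hs : Real.sinh r ≠ 0 := ne_of_gt (by positivity)
  have hc : Real.cosh r ≠ 0 := ne_of_gt (Real.cosh_pos r)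
  have hsq : Real.sqrt 2 ≠ 0 := by positivity
  have hsq2 : Real.sqrt 2 * Real.sqrt 2 = 2 := Real.mul_self_sqrt (by norm_num)
  have h2r : Real.sinh (2 * r) = 2 * Real.sinh r * Real.cosh r := by
    rw [two_mul, Real.sinh_add]; ring
  have hc2r : Real.cosh (2 * r) = Real.cosh r ^ 2 + Real.sinh r ^ 2 := by
    rw [two_mul, Real.cosh_add]; ring
  have hpy : Real.cosh r ^ 2 = 1 + Real.sinh r ^ 2 := by
    have := Real.cosh_sq r; linarith
  have ht : Real.tanh r = Real.sinh r / Real.cosh r := Real.tanh_eq_sinh_div_cosh r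
  constructor
  · rw [fstar_deriv, fstar, gstar, h2r, hc2r, ht, hpy]
    field_simp
    linear_combination (2 * ρ₁) * hpy
  · have hsq3 : Real.sqrt 2 ^ 3 = 2 * Real.sqrt 2 := by
      rw [pow_succ, sq, hsq2]
    rw [gstar_deriv, fstar, gstar, h2r, hc2r, hpy]
    field_simp
    linear_combination (16 * ρ₁ + 32 * ρ₁ * Real.sinh r ^ 2 + 64 * ρ₂) * hpy
      + (-16 * ρ₁ * Real.sinh r ^ 2 - 16 * ρ₁ * Real.sinh r ^ 4 - 32 * ρ₂ * Real.sinh r ^ 2) * hsq2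
end
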